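/- arXiv:1711.02576 — 6 statements merged into one kernel-verified Lean document; each statement's English description precedes it below -/
import Mathlib

section
/- Let F(p) and F(p♯) be the Frobenius companion matrices of p and of its monic reversal polynomial p♯, respectively. (i) If |a_0| ≥ 1, then N(F(p)) ≤ N(C) for every unit sparse companion matrix C of p in Hessenberg form. (ii) If 0 < |a_0| ≤ 1, then N(F(p♯)) ≤ N(D) for every unit sparse companion matrix D of p♯ in Hessenberg form. -/
noncomputable section

/-- Maximum absolute row sum (the `∞`-norm). -/
def infNorm {n : ℕ} (A : Matrix (Fin n) (Fin n) ℂ) : ℝ :=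
  ⨆ i, ∑ j, ‖A i j‖

/-- Maximum absolute column sum (the `1`-norm). -/
def oneNorm {n : ℕ} (A : Matrix (Fin n) (Fin n) ℂ) : ℝ :=
  ⨆ j, ∑ i, ‖A i j‖

/-- `N(A) = min {‖A‖_∞, ‖A‖_1}`. -/
def NN {n : ℕ} (A : Matrix (Fin n) (Fin n) ℂ) : ℝ :=
  min (infNorm A) (oneNorm A)

/-- The monic polynomial `p(x) = x^n + a_{n-1}x^{n-1} + ⋯ + a_1 x + a_0`. -/
def pPoly (n : ℕ) (a : ℕ → ℂ) : Polynomial ℂ :=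
  Polynomial.X ^ n + ∑ k ∈ Finset.range n, Polynomial.C (a k) * Polynomial.X ^ k

/-- Coefficients of the monic reversal polynomial `p♯`:
`asharp n a k` is the coefficient of `x^k` in `p♯`, namely `1/a_0` for `k = 0`
and `a_{n-k}/a_0` for `1 ≤ k ≤ n-1`. -/
def asharp (n : ℕ) (a : ℕ → ℂ) : ℕ → ℂ :=
  fun k => if k = 0 then 1 / a 0 else a (n - k) / a 0

/-- A unit sparse companion matrix of `p` in Hessenberg form, with explicit data:
`m` (0-based; `m + 1 ≤ n`), and 0-based positions `(r k, c k)` (for `k = 0, …, n-1`)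
satisfying `r k - c k = k`, `m ≤ r k ≤ n-1`, `0 ≤ c k ≤ m`; the superdiagonal
entries are `1`, the entry at `(r k, c k)` is `-a_{n-1-k}`, and all other entries
are `0`.  (This is the 0-based translation of the 1-based description.) -/
def IsUnitSparseData (n m : ℕ) (a : ℕ → ℂ) (C : Matrix (Fin n) (Fin n) ℂ)
    (r c : Fin n → Fin n) : Prop :=
  m + 1 ≤ n ∧
  (∀ k : Fin n, (r k : ℕ) = (c k : ℕ) + (k : ℕ)) ∧
  (∀ k : Fin n, m ≤ (r k : ℕ)) ∧
  (∀ k : Fin n, (c k : ℕ) ≤ m) ∧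
  (∀ k : Fin n, C (r k) (c k) = -a (n - 1 - (k : ℕ))) ∧
  (∀ i j : Fin n, (j : ℕ) = (i : ℕ) + 1 → C i j = 1) ∧
  (∀ i j : Fin n, (j : ℕ) ≠ (i : ℕ) + 1 →
    (∀ k : Fin n, ¬(r k = i ∧ c k = j)) → C i j = 0)

/-- A unit sparse companion matrix of `p` in Hessenberg form. -/
def IsUnitSparse (n : ℕ) (a : ℕ → ℂ) (C : Matrix (Fin n) (Fin n) ℂ) : Prop :=
  ∃ (m : ℕ) (r c : Fin n → Fin n), IsUnitSparseData n m a C r c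

/-- A Fiedler companion matrix of `p` in Hessenberg form (with explicit position
data): a unit sparse companion matrix such that for `1 ≤ k ≤ n-1`, if `-a_{k-1}`
occupies position `(i,j)` then `-a_k` occupies position `(i-1,j)` or `(i,j+1)`.
Here the coefficient `-a_{n-1-k}` sits at position index `k`, so the coefficient
`-a_{k-1}` has index `k' = n-k` and `-a_k` has index `n-1-k = k' - 1`. -/
def IsFiedlerData (n m : ℕ) (a : ℕ → ℂ) (C : Matrix (Fin n) (Fin n) ℂ)
    (r c : Fin n → Fin n) : Prop :=
  IsUnitSparseData n m a C r c ∧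
  ∀ k k' : Fin n, (k' : ℕ) = (k : ℕ) + 1 →
    ((r k : ℕ) + 1 = (r k' : ℕ) ∧ c k = c k') ∨
    (r k = r k' ∧ (c k : ℕ) = (c k' : ℕ) + 1)

/-- The Frobenius companion matrix of the monic polynomial with coefficients `a`
(0-based: superdiagonal `1`'s and last row `-a_0, -a_1, …, -a_{n-1}`). -/
def Frob (n : ℕ) (a : ℕ → ℂ) : Matrix (Fin n) (Fin n) ℂ :=
  Matrix.of fun i j =>
    if (j : ℕ) = (i : ℕ) + 1 then 1
    else if (i : ℕ) = n - 1 then -a (j : ℕ)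
    else 0

/-- The Fiedler companion matrix `L_b` (0-based translation): superdiagonal `1`'s,
`(L_b)_{i,b} = -a_{n+b-1-i}` for `b ≤ i ≤ n-2`, and `(L_b)_{n-1,j} = -a_j` for
`0 ≤ j ≤ b`; all other entries `0`. -/
def Lmat (n b : ℕ) (a : ℕ → ℂ) : Matrix (Fin n) (Fin n) ℂ :=
  Matrix.of fun i j =>
    if (j : ℕ) = (i : ℕ) + 1 then 1
    else if (i : ℕ) = n - 1 ∧ (j : ℕ) ≤ b then -a (j : ℕ)
    else if (j : ℕ) = b ∧ b ≤ (i : ℕ) ∧ (i : ℕ) + 2 ≤ n then -a (n + b - 1 - (i : ℕ))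
    else 0

/-- The matrix `W` (0-based translation): `W_{0,0} = -a_{n-1}`, `W_{0,n-1} = -a_0`,
`W_{i,i-1} = 1` for `1 ≤ i ≤ n-1`, `W_{i,0} = a_{i-1}/a_0` for `2 ≤ i ≤ n-1`;
all other entries `0`. -/
def Wmat (n : ℕ) (a : ℕ → ℂ) : Matrix (Fin n) (Fin n) ℂ :=
  Matrix.of fun i j =>
    if (i : ℕ) = 0 ∧ (j : ℕ) = 0 then -a (n - 1)
    else if (i : ℕ) = 0 ∧ (j : ℕ) = n - 1 then -a 0
    else if (i : ℕ) = (j : ℕ) + 1 then 1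
    else if 2 ≤ (i : ℕ) ∧ (j : ℕ) = 0 then a ((i : ℕ) - 1) / a 0
    else 0

/-- The matrix `X_b` (0-based translation): `(X_b)_{0,j} = -a_{n-1-j}` for
`0 ≤ j ≤ n-2-b`, `(X_b)_{0,n-1} = -a_0`, `(X_b)_{i,i-1} = 1` for `1 ≤ i ≤ n-2`,
`(X_b)_{n-1,n-2} = 1`, `(X_b)_{n-1,j} = a_{n-2-j}/a_0` for `n-2-b ≤ j ≤ n-3`;
all other entries `0`. -/
def Xmat (n b : ℕ) (a : ℕ → ℂ) : Matrix (Fin n) (Fin n) ℂ :=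
  Matrix.of fun i j =>
    if (i : ℕ) = 0 ∧ (j : ℕ) + b ≤ n - 2 then -a (n - 1 - (j : ℕ))
    else if (i : ℕ) = 0 ∧ (j : ℕ) = n - 1 then -a 0
    else if (i : ℕ) = (j : ℕ) + 1 ∧ (i : ℕ) + 2 ≤ n then 1
    else if (i : ℕ) = n - 1 ∧ (j : ℕ) = n - 2 then 1
    else if (i : ℕ) = n - 1 ∧ n - 2 ≤ (j : ℕ) + b ∧ (j : ℕ) + 3 ≤ n then
      a (n - 2 - (j : ℕ)) / a 0
    else 0

/-- A matrix `E` of type `E_c(q)` for the monic polynomial with coefficients `b`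
(0-based translation of the 1-based description): superdiagonal `1`'s,
`E_{n-1,0} = -b_0`, and positions `(r k, col k)` for `k = 0, …, n-2` with
`r k = col k + k`, `c ≤ r k`, `1 ≤ col k ≤ c`, holding `-b_{n-1-k}`; all other
entries `0`. -/
def IsTypeE (n c : ℕ) (b : ℕ → ℂ) (E : Matrix (Fin n) (Fin n) ℂ) : Prop :=
  ∃ r col : ℕ → Fin n,
    (∀ k : ℕ, k ≤ n - 2 → (r k : ℕ) = (col k : ℕ) + k) ∧
    (∀ k : ℕ, k ≤ n - 2 → c ≤ (r k : ℕ)) ∧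
    (∀ k : ℕ, k ≤ n - 2 → 1 ≤ (col k : ℕ) ∧ (col k : ℕ) ≤ c) ∧
    (∀ k : ℕ, k ≤ n - 2 → E (r k) (col k) = -b (n - 1 - k)) ∧
    (∀ i j : Fin n, (j : ℕ) = (i : ℕ) + 1 → E i j = 1) ∧
    (∀ i j : Fin n, (i : ℕ) = n - 1 → (j : ℕ) = 0 → E i j = -b 0) ∧
    (∀ i j : Fin n, (j : ℕ) ≠ (i : ℕ) + 1 → ¬((i : ℕ) = n - 1 ∧ (j : ℕ) = 0) →
      (∀ k : ℕ, k ≤ n - 2 → ¬(r k = i ∧ col k = j)) → E i j = 0)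

/-- `A` is of type `E_c(p♯)⁻¹`: `A = E⁻¹` for some `E` of type `E_c(p♯)`. -/
def IsTypeEInv (n c : ℕ) (a : ℕ → ℂ) (A : Matrix (Fin n) (Fin n) ℂ) : Prop :=
  ∃ E : Matrix (Fin n) (Fin n) ℂ, IsTypeE n c (asharp n a) E ∧ A = E⁻¹


private lemma pair_le_sum {n : ℕ} (f : Fin n → ℝ) (hf : ∀ i, 0 ≤ f i) {i j : Fin n}
    (h : i ≠ j) : f i + f j ≤ ∑ k, f k := by
  rw [← Finset.sum_pair h]
  exact Finset.sum_le_sum_of_subset_of_nonneg (Finset.subset_univ _) fun k _ _ => hf k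

private lemma single_le_sum' {n : ℕ} (f : Fin n → ℝ) (hf : ∀ i, 0 ≤ f i) (i : Fin n) :
    f i ≤ ∑ k, f k :=
  Finset.single_le_sum (fun k _ => hf k) (Finset.mem_univ i)

private lemma rowsum_le_infNorm {n : ℕ} (A : Matrix (Fin n) (Fin n) ℂ) (i : Fin n) :
    ∑ j, ‖A i j‖ ≤ infNorm A :=
  le_ciSup (f := fun i => ∑ j, ‖A i j‖)
    (Set.Finite.bddAbove (Set.finite_range _)) i

private lemma colsum_le_oneNorm {n : ℕ} (A : Matrix (Fin n) (Fin n) ℂ) (j : Fin n) :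
    ∑ i, ‖A i j‖ ≤ oneNorm A :=
  le_ciSup (f := fun j => ∑ i, ‖A i j‖)
    (Set.Finite.bddAbove (Set.finite_range _)) j

set_option maxHeartbeats 1000000 in
private lemma key_lemma (n : ℕ) (hn : 2 ≤ n) (b : ℕ → ℂ)
    (hb : 1 ≤ ‖b 0‖) (C : Matrix (Fin n) (Fin n) ℂ)
    (h : IsUnitSparse n b C) : NN (Frob n b) ≤ NN C := by
  haveI : Nonempty (Fin n) := ⟨⟨0, by omega⟩⟩
  obtain ⟨m, r, c, hm, hrc, hmr, hcm, hcoef, hsup, hzero⟩ := h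
  set z : Fin n := ⟨0, by omega⟩ with hz
  set ll : Fin n := ⟨n - 1, by omega⟩ with hll
  have hzv : (z : ℕ) = 0 := rfl
  have hllv : (ll : ℕ) = n - 1 := rfl
  have habs : ∀ (i j : Fin n), 0 ≤ ‖C i j‖ := fun i j => norm_nonneg _
  have hkn : r ll = ll ∧ c ll = z := by
    have h1 := hrc ll
    have h2 : (r ll : ℕ) < n := (r ll).isLt
    exact ⟨Fin.ext (by omega), Fin.ext (by omega)⟩
  have hC0 : C ll z = -b 0 := by
    have := hcoef ll
    rw [hkn.1, hkn.2] at this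
    simpa [hllv] using this
  have hT_inf : ∀ j : Fin n,
      (if (j : ℕ) = 0 then ‖b 0‖ else 1 + ‖b (j : ℕ)‖)
        ≤ infNorm C := by
    intro j
    by_cases hj : (j : ℕ) = 0
    · rw [if_pos hj]
      calc ‖b 0‖ = ‖C ll z‖ := by rw [hC0]; simp
        _ ≤ ∑ j', ‖C ll j'‖ := single_le_sum' _ (habs ll) z
        _ ≤ infNorm C := rowsum_le_infNorm C ll
    · rw [if_neg hj]
      have hj1 : 1 ≤ (j : ℕ) := by omega
      have hjn : (j : ℕ) ≤ n - 1 := by have := j.isLt; omega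
      set k : Fin n := ⟨n - 1 - (j : ℕ), by omega⟩ with hk
      have hkv : (k : ℕ) = n - 1 - (j : ℕ) := rfl
      have hck : C (r k) (c k) = -b (j : ℕ) := by
        have := hcoef k
        rwa [show n - 1 - (k : ℕ) = (j : ℕ) by omega] at this
      have hrck := hrc k
      by_cases hr : (r k : ℕ) = n - 1
      · have hrl : r k = ll := Fin.ext (by omega)
        have hcv : (c k : ℕ) = (j : ℕ) := by omega
        have hne : z ≠ c k := by
          intro hzc; have := congrArg Fin.val hzc; omega
        calc 1 + ‖b (j : ℕ)‖
            ≤ ‖b 0‖ + ‖b (j : ℕ)‖ := by linarith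
          _ = ‖C ll z‖ + ‖C ll (c k)‖ := by
              rw [hC0, ← hrl, hck]; simp
          _ ≤ ∑ j', ‖C ll j'‖ := pair_le_sum _ (habs ll) hne
          _ ≤ infNorm C := rowsum_le_infNorm C ll
      · have hrlt : (r k : ℕ) + 1 < n := by have := (r k).isLt; omega
        set sc : Fin n := ⟨(r k : ℕ) + 1, hrlt⟩ with hsc
        have hscv : (sc : ℕ) = (r k : ℕ) + 1 := rfl
        have h1 : C (r k) sc = 1 := hsup (r k) sc rfl
        have hne : sc ≠ c k := by
          intro h'; have := congrArg Fin.val h'; omega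
        calc 1 + ‖b (j : ℕ)‖
            = ‖C (r k) sc‖ + ‖C (r k) (c k)‖ := by
              rw [h1, hck]; simp
          _ ≤ ∑ j', ‖C (r k) j'‖ := pair_le_sum _ (habs (r k)) hne
          _ ≤ infNorm C := rowsum_le_infNorm C (r k)
  have hT_one : ∀ j : Fin n,
      (if (j : ℕ) = 0 then ‖b 0‖ else 1 + ‖b (j : ℕ)‖)
        ≤ oneNorm C := by
    intro j
    by_cases hj : (j : ℕ) = 0
    · rw [if_pos hj]
      calc ‖b 0‖ = ‖C ll z‖ := by rw [hC0]; simp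
        _ ≤ ∑ i, ‖C i z‖ := single_le_sum' _ (fun i => habs i z) ll
        _ ≤ oneNorm C := colsum_le_oneNorm C z
    · rw [if_neg hj]
      have hj1 : 1 ≤ (j : ℕ) := by omega
      have hjn : (j : ℕ) ≤ n - 1 := by have := j.isLt; omega
      set k : Fin n := ⟨n - 1 - (j : ℕ), by omega⟩ with hk
      have hkv : (k : ℕ) = n - 1 - (j : ℕ) := rfl
      have hck : C (r k) (c k) = -b (j : ℕ) := by
        have := hcoef k
        rwa [show n - 1 - (k : ℕ) = (j : ℕ) by omega] at this
      have hrck := hrc k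
      by_cases hc : (c k : ℕ) = 0
      · have hcz : c k = z := Fin.ext (by omega)
        have hne : ll ≠ r k := by
          intro h'; have := congrArg Fin.val h'; omega
        calc 1 + ‖b (j : ℕ)‖
            ≤ ‖b 0‖ + ‖b (j : ℕ)‖ := by linarith
          _ = ‖C ll z‖ + ‖C (r k) z‖ := by
              rw [hC0, ← hcz, hck]; simp
          _ ≤ ∑ i, ‖C i z‖ := pair_le_sum _ (fun i => habs i z) hne
          _ ≤ oneNorm C := colsum_le_oneNorm C z
      · have hlt : (c k : ℕ) - 1 < n := by have := (c k).isLt; omega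
        set pd : Fin n := ⟨(c k : ℕ) - 1, hlt⟩ with hpd
        have hpdv : (pd : ℕ) = (c k : ℕ) - 1 := rfl
        have h1 : C pd (c k) = 1 := hsup pd (c k) (by omega)
        have hne : pd ≠ r k := by
          intro h'; have := congrArg Fin.val h'; omega
        calc 1 + ‖b (j : ℕ)‖
            = ‖C pd (c k)‖ + ‖C (r k) (c k)‖ := by
              rw [h1, hck]; simp
          _ ≤ ∑ i, ‖C i (c k)‖ := pair_le_sum _ (fun i => habs i (c k)) hne
          _ ≤ oneNorm C := colsum_le_oneNorm C (c k)
  have hF : ∀ j : Fin n, (∑ i, ‖Frob n b i j‖)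
      ≤ (if (j : ℕ) = 0 then ‖b 0‖ else 1 + ‖b (j : ℕ)‖) := by
    intro j
    by_cases hj : (j : ℕ) = 0
    · rw [if_pos hj]
      calc ∑ i, ‖Frob n b i j‖
          ≤ ∑ i, (if i = ll then ‖b 0‖ else 0) := by
            refine Finset.sum_le_sum fun i _ => ?_
            by_cases h1 : (j : ℕ) = (i : ℕ) + 1
            · omega
            · by_cases h2 : (i : ℕ) = n - 1
              · have hi : i = ll := Fin.ext h2
                have hjne : ¬(j : ℕ) = n - 1 + 1 := by omega
                rw [show Frob n b i j = -b (j : ℕ) from by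
                    simp [Frob, h1, h2, hjne],
                  hj, if_pos hi]
                simp
              · have hi : i ≠ ll := by
                  intro h'; exact h2 (congrArg Fin.val h')
                rw [show Frob n b i j = 0 from by simp [Frob, h1, h2], if_neg hi]
                simp
        _ = ‖b 0‖ := by simp
    · rw [if_neg hj]
      have hj1 : 1 ≤ (j : ℕ) := by omega
      have hjn : (j : ℕ) ≤ n - 1 := by have := j.isLt; omega
      set jp : Fin n := ⟨(j : ℕ) - 1, by omega⟩ with hjp
      have hjpv : (jp : ℕ) = (j : ℕ) - 1 := rfl
      calc ∑ i, ‖Frob n b i j‖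
          ≤ ∑ i, ((if i = jp then (1 : ℝ) else 0)
              + (if i = ll then ‖b (j : ℕ)‖ else 0)) := by
            refine Finset.sum_le_sum fun i _ => ?_
            by_cases h1 : (j : ℕ) = (i : ℕ) + 1
            · have hi : i = jp := Fin.ext (by omega)
              have hine : i ≠ ll := by
                intro h'; have := congrArg Fin.val h'; omega
              rw [show Frob n b i j = 1 from by simp [Frob, h1], if_pos hi,
                if_neg hine]
              simp [norm_nonneg]
            · by_cases h2 : (i : ℕ) = n - 1
              · have hi : i = ll := Fin.ext h2
                have hine : i ≠ jp := by
                  intro h'; have := congrArg Fin.val h'; omega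
                have hjne : ¬(j : ℕ) = n - 1 + 1 := by omega
                rw [show Frob n b i j = -b (j : ℕ) from by
                    simp [Frob, h1, h2, hjne],
                  if_neg hine, if_pos hi]
                simp
              · have e1 : i ≠ jp := by
                  intro h'; have := congrArg Fin.val h'; omega
                have e2 : i ≠ ll := by
                  intro h'; exact h2 (congrArg Fin.val h')
                rw [show Frob n b i j = 0 from by simp [Frob, h1, h2],
                  if_neg e1, if_neg e2]
                simp
        _ = 1 + ‖b (j : ℕ)‖ := by
            rw [Finset.sum_add_distrib]
            simp
  have h1 : oneNorm (Frob n b) ≤ infNorm C := ciSup_le fun j => (hF j).trans (hT_inf j)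
  have h2 : oneNorm (Frob n b) ≤ oneNorm C := ciSup_le fun j => (hF j).trans (hT_one j)
  exact le_min (le_trans (min_le_right _ _) h1) (le_trans (min_le_right _ _) h2)

/-- (i) if `|a_0| ≥ 1` then `N(F(p)) ≤ N(C)` for every unit sparse
companion matrix `C` of `p`; (ii) if `0 < |a_0| ≤ 1` then `N(F(p♯)) ≤ N(D)` for
every unit sparse companion matrix `D` of `p♯`. -/
theorem stmt9 (n : ℕ) (hn : 2 ≤ n) (a : ℕ → ℂ) :
    (1 ≤ ‖a 0‖ →
      ∀ C : Matrix (Fin n) (Fin n) ℂ, IsUnitSparse n a C →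
        NN (Frob n a) ≤ NN C) ∧
    (0 < ‖a 0‖ → ‖a 0‖ ≤ 1 →
      ∀ D : Matrix (Fin n) (Fin n) ℂ, IsUnitSparse n (asharp n a) D →
        NN (Frob n (asharp n a)) ≤ NN D) := by
  constructor
  · intro ha C hC
    exact key_lemma n hn a ha C hC
  · intro h0 h1 D hD
    refine key_lemma n hn (asharp n a) ?_ D hD
    have he : asharp n a 0 = 1 / a 0 := by simp [asharp]
    rw [he, norm_div, norm_one]
    exact (one_le_div h0).mpr h1

end
end

section
/- Suppose n ≥ 3, 1 ≤ c ≤ n−2, |a_0| = 1, and A is a matrix of type E_c(p♯)^{−1}. Then N(F) ≤ N(A), where F is the Frobenius companion matrix of p. -/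
noncomputable section

/-- single-entry matrix -/
def sgl {n : ℕ} (p q : Fin n) (v : ℂ) : Matrix (Fin n) (Fin n) ℂ :=
  Matrix.of fun i j => if i = p ∧ j = q then v else 0

lemma sgl_apply {n : ℕ} (p q : Fin n) (v : ℂ) (i j : Fin n) :
    sgl p q v i j = if i = p ∧ j = q then v else 0 := rfl

lemma mul_sgl_apply {n : ℕ} (M : Matrix (Fin n) (Fin n) ℂ) (p q : Fin n) (v : ℂ) (i j : Fin n) :
    (M * sgl p q v) i j = if j = q then M i p * v else 0 := by
  simp only [Matrix.mul_apply, sgl_apply]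
  by_cases h : j = q
  · subst h
    simp only [and_true, if_pos rfl]
    rw [Finset.sum_eq_single_of_mem p (Finset.mem_univ p)]
    · simp
    · intro t _ ht; simp [ht]
  · rw [if_neg h, Finset.sum_eq_zero]
    intro t _; simp [h]

lemma sgl_mul_apply {n : ℕ} (M : Matrix (Fin n) (Fin n) ℂ) (p q : Fin n) (v : ℂ) (i j : Fin n) :
    (sgl p q v * M) i j = if i = p then v * M q j else 0 := by
  simp only [Matrix.mul_apply, sgl_apply]
  by_cases h : i = p
  · subst h
    simp only [true_and, if_pos rfl]
    rw [Finset.sum_eq_single_of_mem q (Finset.mem_univ q)]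
    · simp
    · intro t _ ht; simp [ht]
  · rw [if_neg h, Finset.sum_eq_zero]
    intro t _; simp [h]

/-- subdiagonal ones -/
def subd (n : ℕ) : Matrix (Fin n) (Fin n) ℂ :=
  Matrix.of fun i j => if (i : ℕ) = (j : ℕ) + 1 then 1 else 0

/-- superdiagonal ones -/
def supd (n : ℕ) : Matrix (Fin n) (Fin n) ℂ :=
  Matrix.of fun i j => if (j : ℕ) = (i : ℕ) + 1 then 1 else 0

lemma supd_mul_subd (n : ℕ) (i j : Fin n) :
    (supd n * subd n) i j = if (i : ℕ) = (j : ℕ) ∧ (i : ℕ) < n - 1 then 1 else 0 := by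
  simp only [Matrix.mul_apply, supd, subd, Matrix.of_apply]
  by_cases h : (i : ℕ) < n - 1
  · have hlt : (i : ℕ) + 1 < n := by omega
    rw [Finset.sum_eq_single_of_mem ⟨(i : ℕ) + 1, hlt⟩ (Finset.mem_univ _)]
    · by_cases hij : (i : ℕ) = (j : ℕ)
      · have hj : (j : ℕ) < n - 1 := by omega
        simp [hij, hj]
      · have : ¬((i : ℕ) + 1 = (j : ℕ) + 1) := by omega
        simp [this, hij, h]
    · intro t _ ht
      have : (t : ℕ) ≠ (i : ℕ) + 1 := by
        intro hh; exact ht (Fin.ext hh)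
      simp [this]
  · rw [if_neg (by tauto), Finset.sum_eq_zero]
    intro t _
    have : (t : ℕ) ≠ (i : ℕ) + 1 := by have := t.isLt; omega
    simp [this]


lemma supd_apply {n : ℕ} (i j : Fin n) :
    supd n i j = if (j : ℕ) = (i : ℕ) + 1 then 1 else 0 := rfl

lemma subd_apply {n : ℕ} (i j : Fin n) :
    subd n i j = if (i : ℕ) = (j : ℕ) + 1 then 1 else 0 := rfl

def Pfun {n : ℕ} (hn : 0 < n) (r : ℕ → Fin n) (k : ℕ) : Fin n :=
  if h : (r k : ℕ) = n - 1 then ⟨0, hn⟩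
  else ⟨(r k : ℕ) + 1, by have := (r k).isLt; omega⟩

def Qfun {n : ℕ} (col : ℕ → Fin n) (k : ℕ) : Fin n :=
  ⟨(col k : ℕ) - 1, by have := (col k).isLt; omega⟩

def vfun {n : ℕ} (r : ℕ → Fin n) (a : ℕ → ℂ) (k : ℕ) : ℂ :=
  if (r k : ℕ) = n - 1 then -a (k + 1) else a (k + 1) / a 0

lemma Qfun_val {n : ℕ} (col : ℕ → Fin n) (k : ℕ) :
    (Qfun col k : ℕ) = (col k : ℕ) - 1 := rfl

lemma key_mul {n c : ℕ} (hn : 3 ≤ n) (hn0 : 0 < n) (hc1 : 1 ≤ c) (hc2 : c ≤ n - 2)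
    (a : ℕ → ℂ) (ha : a 0 ≠ 0) (r col : ℕ → Fin n)
    (f0 flast : Fin n) (hf0 : (f0 : ℕ) = 0) (hflast : (flast : ℕ) = n - 1)
    (h1 : ∀ k < n - 1, (r k : ℕ) = (col k : ℕ) + k)
    (h2 : ∀ k < n - 1, c ≤ (r k : ℕ))
    (h3 : ∀ k < n - 1, 1 ≤ (col k : ℕ) ∧ (col k : ℕ) ≤ c) :
    (supd n + sgl flast f0 (-(1 / a 0)) +
        ∑ k ∈ Finset.range (n - 1), sgl (r k) (col k) (-(a (k + 1) / a 0))) *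
      (subd n + sgl f0 flast (-a 0) +
        ∑ k ∈ Finset.range (n - 1),
          sgl (Pfun hn0 r k) (Qfun col k) (vfun r a k)) = 1 := by
  have E1 : supd n * subd n = 1 - sgl flast flast 1 := by
    ext i j
    rw [supd_mul_subd, Matrix.sub_apply, Matrix.one_apply, sgl_apply]
    have hi := i.isLt; have hj := j.isLt
    simp only [Fin.ext_iff, hflast]
    split_ifs <;> first | (exfalso; omega) | norm_num
  have E2 : supd n * sgl f0 flast (-a 0) = 0 := by
    ext i j
    rw [mul_sgl_apply, supd_apply, Matrix.zero_apply, hf0]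
    split_ifs <;> simp_all
  have E4 : sgl flast f0 (-(1 / a 0)) * subd n = 0 := by
    ext i j
    rw [sgl_mul_apply, subd_apply, hf0, Matrix.zero_apply]
    split_ifs <;> simp_all
  have E5 : sgl flast f0 (-(1 / a 0)) * sgl f0 flast (-a 0) = sgl flast flast 1 := by
    ext i j
    rw [sgl_mul_apply, sgl_apply, sgl_apply]
    by_cases hi : i = flast
    · by_cases hj : j = flast
      · rw [if_pos hi, if_pos ⟨rfl, hj⟩, if_pos ⟨hi, hj⟩]
        field_simp
      · rw [if_pos hi, if_neg (by tauto), if_neg (by tauto), mul_zero]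
    · rw [if_neg hi, if_neg (by tauto)]
  have E8 : ∀ k < n - 1,
      sgl (r k) (col k) (-(a (k + 1) / a 0)) * sgl f0 flast (-a 0) = 0 := by
    intro k hk
    ext i j
    rw [sgl_mul_apply, sgl_apply, Matrix.zero_apply]
    have hcol := h3 k hk
    have : ¬(col k = f0 ∧ j = flast) := by
      rintro ⟨hh, -⟩
      rw [Fin.ext_iff, hf0] at hh
      omega
    rw [if_neg this, mul_zero, ite_self]
  have E9 : ∀ k < n - 1, ∀ k' < n - 1,
      sgl (r k) (col k) (-(a (k + 1) / a 0)) *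
        sgl (Pfun hn0 r k') (Qfun col k') (vfun r a k') = 0 := by
    intro k hk k' hk'
    ext i j
    rw [sgl_mul_apply, sgl_apply, Matrix.zero_apply]
    have hcol := h3 k hk
    have hr' := h2 k' hk'
    have : ¬(col k = Pfun hn0 r k' ∧ j = Qfun col k') := by
      rintro ⟨hh, -⟩
      rw [Fin.ext_iff] at hh
      unfold Pfun at hh
      split_ifs at hh <;> simp at hh <;> omega
    rw [if_neg this, mul_zero, ite_self]
  have E367 : ∀ k < n - 1,
      supd n * sgl (Pfun hn0 r k) (Qfun col k) (vfun r a k) +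
        sgl flast f0 (-(1 / a 0)) * sgl (Pfun hn0 r k) (Qfun col k) (vfun r a k) +
        sgl (r k) (col k) (-(a (k + 1) / a 0)) * subd n = 0 := by
    intro k hk
    have hcol := h3 k hk
    have hr := h2 k hk
    have hrc := h1 k hk
    have hrlt := (r k).isLt
    ext i j
    rw [Matrix.add_apply, Matrix.add_apply, mul_sgl_apply, sgl_mul_apply,
      sgl_mul_apply, subd_apply, sgl_apply, Matrix.zero_apply]
    by_cases hrk : (r k : ℕ) = n - 1
    · -- Pfun = f0-like, vfun = -a (k+1)
      have hP : (Pfun hn0 r k : ℕ) = 0 := by unfold Pfun; rw [dif_pos hrk]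
      have hv : vfun r a k = -a (k + 1) := by unfold vfun; rw [if_pos hrk]
      have hsupd : supd n i (Pfun hn0 r k) = 0 := by
        rw [supd_apply, hP, if_neg (by omega)]
      by_cases hjQ : j = Qfun col k
      · by_cases hif : i = flast
        · have hir : i = r k := by rw [Fin.ext_iff] at hif ⊢; omega
          rw [if_pos hjQ, if_pos hif, if_pos hir, hsupd, zero_mul, hv]
          have hPf : f0 = Pfun hn0 r k := by rw [Fin.ext_iff, hf0, hP]
          rw [if_pos ⟨hPf, hjQ⟩]
          have hcj : (col k : ℕ) = (j : ℕ) + 1 := by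
            rw [Fin.ext_iff, Qfun_val] at hjQ; omega
          rw [if_pos hcj]
          field_simp
          ring
        · have hir : ¬(i = r k) := by
            rw [Fin.ext_iff] at hif ⊢; omega
          rw [if_pos hjQ, if_neg hif, if_neg hir, hsupd, zero_mul]
          ring
      · have hcj : ¬((col k : ℕ) = (j : ℕ) + 1) := by
          rw [Fin.ext_iff, Qfun_val] at hjQ; omega
        have hT6 : ¬(f0 = Pfun hn0 r k ∧ j = Qfun col k) := fun hh => hjQ hh.2
        rw [if_neg hjQ, if_neg hT6, if_neg hcj]
        simp
    · have hP : (Pfun hn0 r k : ℕ) = (r k : ℕ) + 1 := by unfold Pfun; rw [dif_neg hrk]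
      have hv : vfun r a k = a (k + 1) / a 0 := by unfold vfun; rw [if_neg hrk]
      have hZ : ¬(f0 = Pfun hn0 r k ∧ j = Qfun col k) := by
        rintro ⟨hh, -⟩; rw [Fin.ext_iff, hf0, hP] at hh; omega
      rw [if_neg hZ, mul_zero, ite_self]
      by_cases hjQ : j = Qfun col k
      · by_cases hir : i = r k
        · have hsupd : supd n i (Pfun hn0 r k) = 1 := by
            rw [supd_apply, hP, if_pos (by rw [Fin.ext_iff] at hir; omega)]
          have hcj : (col k : ℕ) = (j : ℕ) + 1 := by
            rw [Fin.ext_iff, Qfun_val] at hjQ; omega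
          rw [if_pos hjQ, if_pos hir, if_pos hcj, hsupd, hv]
          ring
        · have hsupd : supd n i (Pfun hn0 r k) = 0 := by
            rw [supd_apply, hP, if_neg (by rw [Fin.ext_iff] at hir; omega)]
          rw [if_pos hjQ, if_neg hir, hsupd, zero_mul]
          ring
      · have hcj : ¬((col k : ℕ) = (j : ℕ) + 1) := by
          rw [Fin.ext_iff, Qfun_val] at hjQ; omega
        rw [if_neg hjQ, if_neg hcj]
        split_ifs <;> simp
  -- now assemble
  set Zm := sgl flast f0 (-(1 / a 0)) with hZm
  set Ym := sgl f0 flast (-a 0) with hYm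
  set Km := ∑ k ∈ Finset.range (n - 1), sgl (r k) (col k) (-(a (k + 1) / a 0)) with hKm
  set Lm := ∑ k ∈ Finset.range (n - 1),
    sgl (Pfun hn0 r k) (Qfun col k) (vfun r a k) with hLm
  have hZero1 : Km * Ym = 0 := by
    rw [hKm, Finset.sum_mul]
    exact Finset.sum_eq_zero fun k hk => E8 k (Finset.mem_range.mp hk)
  have hZero2 : Km * Lm = 0 := by
    rw [hKm, Finset.sum_mul]
    apply Finset.sum_eq_zero
    intro k hk
    rw [hLm, Matrix.mul_sum]
    exact Finset.sum_eq_zero fun k' hk' =>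
      E9 k (Finset.mem_range.mp hk) k' (Finset.mem_range.mp hk')
  have hSum3 : supd n * Lm + Zm * Lm + Km * subd n = 0 := by
    rw [hLm, hKm, Matrix.mul_sum, Matrix.mul_sum, Finset.sum_mul,
      ← Finset.sum_add_distrib, ← Finset.sum_add_distrib]
    exact Finset.sum_eq_zero fun k hk => E367 k (Finset.mem_range.mp hk)
  have hexp : (supd n + Zm + Km) * (subd n + Ym + Lm) =
      supd n * subd n + Zm * Ym + (supd n * Lm + Zm * Lm + Km * subd n) +
        (supd n * Ym + Zm * subd n + (Km * Ym + Km * Lm)) := by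
    simp only [Matrix.add_mul, Matrix.mul_add]
    abel
  rw [hexp, E1, E5, hSum3, E2, E4, hZero1, hZero2]
  simp


lemma Edec {n c : ℕ} (hn : 3 ≤ n) (a : ℕ → ℂ)
    (E : Matrix (Fin n) (Fin n) ℂ) (r col : ℕ → Fin n)
    (f0 flast : Fin n) (hf0 : (f0 : ℕ) = 0) (hflast : (flast : ℕ) = n - 1)
    (h1 : ∀ k : ℕ, k ≤ n - 2 → (r k : ℕ) = (col k : ℕ) + k)
    (h3 : ∀ k : ℕ, k ≤ n - 2 → 1 ≤ (col k : ℕ) ∧ (col k : ℕ) ≤ c)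
    (h4 : ∀ k : ℕ, k ≤ n - 2 → E (r k) (col k) = -asharp n a (n - 1 - k))
    (h5 : ∀ i j : Fin n, (j : ℕ) = (i : ℕ) + 1 → E i j = 1)
    (h6 : ∀ i j : Fin n, (i : ℕ) = n - 1 → (j : ℕ) = 0 → E i j = -asharp n a 0)
    (h7 : ∀ i j : Fin n, (j : ℕ) ≠ (i : ℕ) + 1 → ¬((i : ℕ) = n - 1 ∧ (j : ℕ) = 0) →
      (∀ k : ℕ, k ≤ n - 2 → ¬(r k = i ∧ col k = j)) → E i j = 0) :
    E = supd n + sgl flast f0 (-(1 / a 0)) +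
      ∑ k ∈ Finset.range (n - 1), sgl (r k) (col k) (-(a (k + 1) / a 0)) := by
  have hb0 : asharp n a 0 = 1 / a 0 := by simp [asharp]
  have hbk : ∀ k : ℕ, k < n - 1 → asharp n a (n - 1 - k) = a (k + 1) / a 0 := by
    intro k hk
    unfold asharp
    rw [if_neg (by omega), show n - (n - 1 - k) = k + 1 by omega]
  ext i j
  rw [Matrix.add_apply, Matrix.add_apply, Matrix.sum_apply, supd_apply, sgl_apply]
  by_cases hj : (j : ℕ) = (i : ℕ) + 1
  · rw [h5 i j hj, if_pos hj]
    have hng : ¬(i = flast ∧ j = f0) := by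
      rintro ⟨-, hh⟩
      rw [Fin.ext_iff, hf0] at hh
      omega
    rw [if_neg hng, Finset.sum_eq_zero, add_zero, add_zero]
    intro k hk
    have hk' : k < n - 1 := Finset.mem_range.mp hk
    have hrc := h1 k (by omega)
    rw [sgl_apply, if_neg]
    rintro ⟨hik, hjk⟩
    rw [hik, hjk] at hj
    omega
  · by_cases hij : (i : ℕ) = n - 1 ∧ (j : ℕ) = 0
    · rw [h6 i j hij.1 hij.2, if_neg hj, hb0]
      have hpos : i = flast ∧ j = f0 :=
        ⟨Fin.ext (by rw [hflast]; exact hij.1), Fin.ext (by rw [hf0]; exact hij.2)⟩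
      rw [if_pos hpos, Finset.sum_eq_zero, add_zero, zero_add]
      intro k hk
      have hk' : k < n - 1 := Finset.mem_range.mp hk
      have hcol := h3 k (by omega)
      rw [sgl_apply, if_neg]
      rintro ⟨-, hjk⟩
      rw [hjk] at hij
      omega
    · by_cases hex : ∃ k, k < n - 1 ∧ i = r k ∧ j = col k
      · obtain ⟨k, hk, hik, hjk⟩ := hex
        have hrc := h1 k (by omega)
        have hcol := h3 k (by omega)
        rw [hik, hjk, h4 k (by omega), hbk k hk]
        rw [if_neg (by omega), if_neg (by
          rintro ⟨-, hh⟩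
          rw [Fin.ext_iff, hf0] at hh
          omega)]
        rw [Finset.sum_eq_single_of_mem k (Finset.mem_range.mpr hk)]
        · rw [sgl_apply, if_pos ⟨rfl, rfl⟩, zero_add, zero_add]
        · intro k' hk' hne
          have hrc' := h1 k' (by have := Finset.mem_range.mp hk'; omega)
          rw [sgl_apply, if_neg]
          rintro ⟨hik', hjk'⟩
          rw [Fin.ext_iff] at hik' hjk'
          exact hne (by omega)
      · rw [h7 i j hj hij (fun k hk => by
          rintro ⟨hik, hjk⟩
          exact hex ⟨k, by omega, hik.symm, hjk.symm⟩)]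
        rw [if_neg hj, if_neg (by
          rintro ⟨hhi, hhj⟩
          rw [Fin.ext_iff, hflast] at hhi
          rw [Fin.ext_iff, hf0] at hhj
          exact hij ⟨hhi, hhj⟩)]
        rw [Finset.sum_eq_zero, add_zero, add_zero]
        intro k hk
        rw [sgl_apply, if_neg]
        rintro ⟨hik, hjk⟩
        exact hex ⟨k, by have := Finset.mem_range.mp hk; omega, hik, hjk⟩

/-- if `n ≥ 3`, `1 ≤ c ≤ n-2`, `|a_0| = 1` and `A` is of type
`E_c(p♯)⁻¹`, then `N(F) ≤ N(A)`. -/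

theorem stmt11 (n c : ℕ) (hn : 3 ≤ n) (hc1 : 1 ≤ c) (hc2 : c ≤ n - 2)
    (a : ℕ → ℂ) (ha : a 0 ≠ 0) (ha0 : ‖a 0‖ = 1)
    (A : Matrix (Fin n) (Fin n) ℂ) (hA : IsTypeEInv n c a A) :
    NN (Frob n a) ≤ NN A := by
  have hn0 : 0 < n := by omega
  obtain ⟨E, hEt, hAE⟩ := hA
  obtain ⟨r, col, h1, h2, h3, h4, h5, h6, h7⟩ := hEt
  set f0 : Fin n := ⟨0, hn0⟩ with hf0def
  set flast : Fin n := ⟨n - 1, by omega⟩ with hflastdef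
  have hf0 : (f0 : ℕ) = 0 := rfl
  have hflast : (flast : ℕ) = n - 1 := rfl
  have h1' : ∀ k < n - 1, (r k : ℕ) = (col k : ℕ) + k := fun k hk => h1 k (by omega)
  have h2' : ∀ k < n - 1, c ≤ (r k : ℕ) := fun k hk => h2 k (by omega)
  have h3' : ∀ k < n - 1, 1 ≤ (col k : ℕ) ∧ (col k : ℕ) ≤ c := fun k hk => h3 k (by omega)
  have hEdec := Edec (c := c) hn a E r col f0 flast hf0 hflast h1 h3 h4 h5 h6 h7
  have hprod := key_mul hn hn0 hc1 hc2 a ha r col f0 flast hf0 hflast h1' h2' h3'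
  set B : Matrix (Fin n) (Fin n) ℂ := subd n + sgl f0 flast (-a 0) +
    ∑ k ∈ Finset.range (n - 1), sgl (Pfun hn0 r k) (Qfun col k) (vfun r a k) with hBdef
  have hAB : A = B := by
    rw [hAE, hEdec]
    exact Matrix.inv_eq_right_inv hprod
  -- entrywise description of B
  have hBapply : ∀ i j : Fin n, B i j =
      (if (i : ℕ) = (j : ℕ) + 1 then 1 else 0) +
      (if i = f0 ∧ j = flast then -a 0 else 0) +
      ∑ k ∈ Finset.range (n - 1),
        (if i = Pfun hn0 r k ∧ j = Qfun col k then vfun r a k else 0) := by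
    intro i j
    rw [hBdef]
    rw [Matrix.add_apply, Matrix.add_apply, Matrix.sum_apply]
    rfl
  -- choose maximal coefficient
  obtain ⟨m, hm_mem, hm_max⟩ := Finset.exists_max_image (Finset.Icc 1 (n - 1))
    (fun t => ‖a t‖) ⟨1, Finset.mem_Icc.mpr ⟨le_refl 1, by omega⟩⟩
  have hm1 : 1 ≤ m ∧ m ≤ n - 1 := Finset.mem_Icc.mp hm_mem
  set K := m - 1 with hKdef
  have hKlt : K < n - 1 := by omega
  have hKm : K + 1 = m := by omega
  have hcolK := h3' K hKlt
  have hrK := h2' K hKlt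
  have hrcK := h1' K hKlt
  have hrKlt := (r K).isLt
  have hPval : (Pfun hn0 r K : ℕ) = if (r K : ℕ) = n - 1 then 0 else (r K : ℕ) + 1 := by
    unfold Pfun; split_ifs <;> rfl
  have hQval : (Qfun col K : ℕ) = (col K : ℕ) - 1 := rfl
  have habsv : ‖vfun r a K‖ = ‖a m‖ := by
    unfold vfun
    split_ifs
    · rw [norm_neg, hKm]
    · rw [norm_div, ha0, div_one, hKm]
  -- B at the main coefficient position
  have hB1 : B (Pfun hn0 r K) (Qfun col K) = vfun r a K := by
    rw [hBapply]
    rw [if_neg (by rw [hQval]; split_ifs at hPval <;> omega)]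
    rw [if_neg (by
      rintro ⟨-, hh⟩
      rw [Fin.ext_iff, hQval, hflast] at hh
      omega)]
    rw [Finset.sum_eq_single_of_mem K (Finset.mem_range.mpr hKlt)]
    · rw [if_pos ⟨rfl, rfl⟩, zero_add, zero_add]
    · intro k' hk' hne
      have hk'lt : k' < n - 1 := Finset.mem_range.mp hk'
      have hcol' := h3' k' hk'lt
      have hrc' := h1' k' hk'lt
      have hr' := h2' k' hk'lt
      have hP'val : (Pfun hn0 r k' : ℕ) = if (r k' : ℕ) = n - 1 then 0 else (r k' : ℕ) + 1 := by
        unfold Pfun; split_ifs <;> rfl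
      rw [if_neg]
      rintro ⟨hPe, hQe⟩
      rw [Fin.ext_iff, hPval, hP'val] at hPe
      rw [Fin.ext_iff] at hQe
      have hQe' : (col K : ℕ) - 1 = (col k' : ℕ) - 1 := hQe
      apply hne
      split_ifs at hPe <;> omega
  -- B at the subdiagonal one in the same column
  have hB2 : B (col K) (Qfun col K) = 1 := by
    rw [hBapply]
    rw [if_pos (by rw [hQval]; omega)]
    rw [if_neg (by
      rintro ⟨hh, -⟩
      rw [Fin.ext_iff, hf0] at hh
      omega)]
    rw [Finset.sum_eq_zero, add_zero, add_zero]
    intro k hk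
    have hklt : k < n - 1 := Finset.mem_range.mp hk
    have hr' := h2' k hklt
    have hP'val : (Pfun hn0 r k : ℕ) = if (r k : ℕ) = n - 1 then 0 else (r k : ℕ) + 1 := by
      unfold Pfun; split_ifs <;> rfl
    rw [if_neg]
    rintro ⟨hPe, -⟩
    rw [Fin.ext_iff, hP'val] at hPe
    split_ifs at hPe <;> omega
  have hne2 : Pfun hn0 r K ≠ col K := by
    rw [Ne, Fin.ext_iff, hPval]
    split_ifs <;> omega
  -- generic pair bounds
  have pair_row : ∀ (i0 j0 j1 : Fin n), j0 ≠ j1 →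
      ‖B i0 j0‖ + ‖B i0 j1‖ ≤ ∑ j, ‖B i0 j‖ := by
    intro i0 j0 j1 hne
    calc ‖B i0 j0‖ + ‖B i0 j1‖
        = ∑ j ∈ ({j0, j1} : Finset (Fin n)), ‖B i0 j‖ :=
          (Finset.sum_pair (f := fun j => ‖B i0 j‖) hne).symm
      _ ≤ ∑ j, ‖B i0 j‖ :=
          Finset.sum_le_sum_of_subset_of_nonneg (Finset.subset_univ _)
            (fun j _ _ => norm_nonneg _)
  have pair_col : ∀ (j0 i0 i1 : Fin n), i0 ≠ i1 →
      ‖B i0 j0‖ + ‖B i1 j0‖ ≤ ∑ i, ‖B i j0‖ := by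
    intro j0 i0 i1 hne
    calc ‖B i0 j0‖ + ‖B i1 j0‖
        = ∑ i ∈ ({i0, i1} : Finset (Fin n)), ‖B i j0‖ :=
          (Finset.sum_pair (f := fun i => ‖B i j0‖) hne).symm
      _ ≤ ∑ i, ‖B i j0‖ :=
          Finset.sum_le_sum_of_subset_of_nonneg (Finset.subset_univ _)
            (fun i _ _ => norm_nonneg _)
  -- column bound for B
  have hcolB : ‖a m‖ + 1 ≤ ∑ i, ‖B i (Qfun col K)‖ := by
    have := pair_col (Qfun col K) (Pfun hn0 r K) (col K) hne2
    rw [hB1, hB2, habsv, norm_one] at this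
    exact this
  -- row bound for B
  have hrowB : ‖a m‖ + 1 ≤ ∑ j, ‖B (Pfun hn0 r K) j‖ := by
    by_cases hrKn : (r K : ℕ) = n - 1
    · -- second entry is -a 0 at column flast
      have hB3 : B (Pfun hn0 r K) flast = -a 0 := by
        rw [hBapply]
        rw [if_neg (by rw [hPval, if_pos hrKn, hflast]; omega)]
        rw [if_pos ⟨Fin.ext (by rw [hPval, if_pos hrKn, hf0]), rfl⟩]
        rw [Finset.sum_eq_zero, add_zero, zero_add]
        intro k hk
        have hklt : k < n - 1 := Finset.mem_range.mp hk
        have hcol' := h3' k hklt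
        rw [if_neg]
        rintro ⟨-, hQe⟩
        rw [Fin.ext_iff, hflast] at hQe
        have : (n : ℕ) - 1 = (col k : ℕ) - 1 := hQe
        omega
      have hne3 : Qfun col K ≠ flast := by
        rw [Ne, Fin.ext_iff, hQval, hflast]
        omega
      have := pair_row (Pfun hn0 r K) (Qfun col K) flast hne3
      rw [hB1, hB3, habsv, norm_neg, ha0] at this
      exact this
    · have hj1lt : (r K : ℕ) < n := hrKlt
      have hB3 : B (Pfun hn0 r K) ⟨(r K : ℕ), hj1lt⟩ = 1 := by
        rw [hBapply]
        rw [if_pos (by rw [hPval, if_neg hrKn])]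
        rw [if_neg (by
          rintro ⟨hh, -⟩
          rw [Fin.ext_iff, hPval, if_neg hrKn, hf0] at hh
          omega)]
        rw [Finset.sum_eq_zero, add_zero, add_zero]
        intro k hk
        have hklt : k < n - 1 := Finset.mem_range.mp hk
        have hcol' := h3' k hklt
        have hrc' := h1' k hklt
        have hr' := h2' k hklt
        have hP'val : (Pfun hn0 r k : ℕ) = if (r k : ℕ) = n - 1 then 0 else (r k : ℕ) + 1 := by
          unfold Pfun; split_ifs <;> rfl
        rw [if_neg]
        rintro ⟨hPe, hQe⟩
        rw [Fin.ext_iff, hPval, if_neg hrKn, hP'val] at hPe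
        rw [Fin.ext_iff] at hQe
        have hQe' : (r K : ℕ) = (col k : ℕ) - 1 := hQe
        split_ifs at hPe <;> omega
      have hne3 : Qfun col K ≠ ⟨(r K : ℕ), hj1lt⟩ := by
        rw [Ne, Fin.ext_iff, hQval]
        simp only []
        omega
      have := pair_row (Pfun hn0 r K) (Qfun col K) ⟨(r K : ℕ), hj1lt⟩ hne3
      rw [hB1, hB3, habsv, norm_one] at this
      exact this
  -- norms of B are at least 1 + |a m|
  haveI : Nonempty (Fin n) := ⟨f0⟩
  have hinfB : ‖a m‖ + 1 ≤ infNorm B :=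
    hrowB.trans (le_ciSup (f := fun i => ∑ j, ‖B i j‖)
      ((Set.finite_range _).bddAbove) (Pfun hn0 r K))
  have honeB : ‖a m‖ + 1 ≤ oneNorm B :=
    hcolB.trans (le_ciSup (f := fun j => ∑ i, ‖B i j‖)
      ((Set.finite_range _).bddAbove) (Qfun col K))
  -- N(F) ≤ 1 + |a m|
  have hF : NN (Frob n a) ≤ ‖a m‖ + 1 := by
    refine (min_le_right _ _).trans ?_
    apply ciSup_le
    intro j
    have hstep : ∀ i : Fin n, ‖Frob n a i j‖ ≤
        (if (j : ℕ) = (i : ℕ) + 1 then 1 else 0) +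
        (if (i : ℕ) = n - 1 then (if (j : ℕ) = 0 then 1 else ‖a m‖) else 0) := by
      intro i
      show ‖if (j : ℕ) = (i : ℕ) + 1 then 1
        else if (i : ℕ) = n - 1 then -a (j : ℕ) else 0‖ ≤ _
      by_cases hji : (j : ℕ) = (i : ℕ) + 1
      · rw [if_pos hji, if_pos hji, norm_one]
        have h0 : (0:ℝ) ≤ if (i : ℕ) = n - 1 then
            (if (j : ℕ) = 0 then 1 else ‖a m‖) else 0 := by
          split_ifs <;> first | exact zero_le_one | exact norm_nonneg _ | exact le_refl 0
        linarith
      · rw [if_neg hji, if_neg hji, zero_add]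
        by_cases hi : (i : ℕ) = n - 1
        · rw [if_pos hi, if_pos hi, norm_neg]
          by_cases hj0 : (j : ℕ) = 0
          · rw [if_pos hj0, hj0, ha0]
          · rw [if_neg hj0]
            exact hm_max (j : ℕ) (Finset.mem_Icc.mpr ⟨by omega, by have := j.isLt; omega⟩)
        · rw [if_neg hi, if_neg hi, norm_zero]
    have hsum2 : (∑ i : Fin n, if (i : ℕ) = n - 1 then
        (if (j : ℕ) = 0 then (1:ℝ) else ‖a m‖) else 0) =
        (if (j : ℕ) = 0 then (1:ℝ) else ‖a m‖) := by
      rw [Finset.sum_eq_single_of_mem flast (Finset.mem_univ _)]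
      · rw [if_pos hflast]
      · intro i _ hne
        rw [if_neg]
        intro hh
        exact hne (Fin.ext (by rw [hh, hflast]))
    calc ∑ i, ‖Frob n a i j‖
        ≤ ∑ i : Fin n, ((if (j : ℕ) = (i : ℕ) + 1 then 1 else 0) +
          (if (i : ℕ) = n - 1 then (if (j : ℕ) = 0 then 1 else ‖a m‖) else 0)) :=
          Finset.sum_le_sum fun i _ => hstep i
      _ = (∑ i : Fin n, (if (j : ℕ) = (i : ℕ) + 1 then (1:ℝ) else 0)) +
          (∑ i : Fin n, if (i : ℕ) = n - 1 then
            (if (j : ℕ) = 0 then (1:ℝ) else ‖a m‖) else 0) :=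
          Finset.sum_add_distrib
      _ ≤ ‖a m‖ + 1 := by
          rw [hsum2]
          by_cases hj0 : (j : ℕ) = 0
          · rw [if_pos hj0, Finset.sum_eq_zero (fun i _ => if_neg (by omega))]
            have := norm_nonneg (a m)
            linarith
          · rw [if_neg hj0]
            have hs1 : (∑ i : Fin n, (if (j : ℕ) = (i : ℕ) + 1 then (1:ℝ) else 0)) = 1 := by
              have hjlt : (j : ℕ) - 1 < n := by have := j.isLt; omega
              rw [Finset.sum_eq_single_of_mem ⟨(j : ℕ) - 1, hjlt⟩ (Finset.mem_univ _)]
              · rw [if_pos (by simp only []; omega)]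
              · intro i _ hne
                rw [if_neg]
                intro hh
                exact hne (Fin.ext (by simp only []; omega))
            rw [hs1]
            linarith
  rw [hAB]
  exact le_min (hF.trans hinfB) (hF.trans honeB)

end
end

section
/- Let M = max{|a_k| : 1 ≤ k ≤ n−1}. Suppose n ≥ 3, 1 ≤ c ≤ n−2, |a_0| > 1, |a_{n−1}| = M, and A is a matrix of type E_c(p♯)^{−1}. Then N(F) ≤ N(A), where F is the Frobenius companion matrix of p. -/
noncomputable section

lemma finRotate_val {n : ℕ} (j : Fin n) :
    ((finRotate n j : Fin n) : ℕ) = if (j : ℕ) = n - 1 then 0 else (j : ℕ) + 1 := by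
  cases n with
  | zero => exact j.elim0
  | succ m =>
    rw [finRotate_succ_apply, Fin.val_add_one]
    rcases eq_or_ne j (Fin.last m) with h | h
    · simp [h, Fin.last]
    · have : (j : ℕ) ≠ m := fun hh => h (Fin.ext hh)
      simp [h, Fin.ext_iff, Nat.succ_sub_one, this]

/-- if `n ≥ 3`, `1 ≤ c ≤ n-2`, `|a_0| > 1`, `|a_{n-1}| = M` and `A`
is of type `E_c(p♯)⁻¹`, then `N(F) ≤ N(A)`. -/
theorem stmt13 (n c : ℕ) (hn : 3 ≤ n) (hc1 : 1 ≤ c) (hc2 : c ≤ n - 2)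
    (a : ℕ → ℂ) (ha : a 0 ≠ 0) (M : ℝ)
    (hM : IsGreatest ((fun k => ‖a k‖) '' (Set.Icc 1 (n - 1))) M)
    (ha0 : 1 < ‖a 0‖) (han : ‖a (n - 1)‖ = M)
    (A : Matrix (Fin n) (Fin n) ℂ) (hA : IsTypeEInv n c a A) :
    NN (Frob n a) ≤ NN A := by
  obtain ⟨E, ⟨r, col, h1, h2, h3, h4, h5, h6, h7⟩, hAE⟩ := hA
  set i0 : Fin n := ⟨0, by omega⟩ with hi0
  set i1 : Fin n := ⟨1, by omega⟩ with hi1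
  set il : Fin n := ⟨n - 1, by omega⟩ with hil
  have hi0v : (i0 : ℕ) = 0 := rfl
  have hi1v : (i1 : ℕ) = 1 := rfl
  have hilv : (il : ℕ) = n - 1 := rfl
  have hM0 : 0 ≤ M := han ▸ norm_nonneg _
  have hMub : ∀ j : ℕ, 1 ≤ j → j ≤ n - 1 → ‖a j‖ ≤ M :=
    fun j hj1 hj2 => hM.2 ⟨j, ⟨hj1, hj2⟩, rfl⟩
  -- E is invertible
  have hdet : IsUnit E.det := by
    have hlt : (E.submatrix id (finRotate n)).BlockTriangular OrderDual.toDual := by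
      intro i j hij
      have hij' : (i : ℕ) < (j : ℕ) := hij
      simp only [Matrix.submatrix_apply, id_eq]
      by_cases hj : (j : ℕ) = n - 1
      · have hv : ((finRotate n j : Fin n) : ℕ) = 0 := by rw [finRotate_val, if_pos hj]
        apply h7
        · omega
        · omega
        · intro k hk ⟨hrk, hck⟩
          have e3 := (h3 k hk).1
          rw [hck] at e3; omega
      · have hv : ((finRotate n j : Fin n) : ℕ) = (j : ℕ) + 1 := by
          rw [finRotate_val, if_neg hj]
        apply h7
        · omega
        · omega
        · intro k hk ⟨hrk, hck⟩
          have e1 := h1 k hk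
          rw [hrk, hck] at e1
          omega
    have hdet' : (E.submatrix id (finRotate n)).det = -(1 / a 0) := by
      rw [Matrix.det_of_lowerTriangular _ hlt]
      rw [Finset.prod_eq_single il]
      · have hv : ((finRotate n il : Fin n) : ℕ) = 0 := by
          rw [finRotate_val, if_pos hilv]
        simp only [Matrix.submatrix_apply, id_eq]
        rw [h6 il (finRotate n il) hilv hv]
        simp [asharp]
      · intro b _ hb
        simp only [Matrix.submatrix_apply, id_eq]
        apply h5
        have hbv : (b : ℕ) ≠ n - 1 := fun hh => hb (Fin.ext (hh.trans hilv.symm))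
        rw [finRotate_val, if_neg hbv]
      · intro h; exact absurd (Finset.mem_univ il) h
    have hne : E.det ≠ 0 := by
      intro h
      rw [Matrix.det_permute', h, mul_zero] at hdet'
      have hz : -(1 / a 0) ≠ 0 := by
        simp only [ne_eq, neg_eq_zero, one_div, inv_eq_zero]; exact ha
      exact hz hdet'.symm
    exact Ne.isUnit hne
  have hEA : E * A = 1 := by rw [hAE]; exact Matrix.mul_nonsing_inv E hdet
  have hAEone : A * E = 1 := by rw [hAE]; exact Matrix.nonsing_inv_mul E hdet
  -- rows 0..c-1 of E are standard basis rows
  have hrow : ∀ i : Fin n, (i : ℕ) + 1 ≤ c → ∀ j : Fin n,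
      E i j = if (j : ℕ) = (i : ℕ) + 1 then 1 else 0 := by
    intro i hi j
    by_cases hj : (j : ℕ) = (i : ℕ) + 1
    · rw [if_pos hj]; exact h5 i j hj
    · rw [if_neg hj]
      apply h7 i j hj
      · omega
      · intro k hk ⟨hrk, hck⟩
        have e2 := h2 k hk
        rw [hrk] at e2; omega
  -- rows 1..c of A are standard basis rows (shifted)
  have hArow : ∀ j : Fin n, 1 ≤ (j : ℕ) → (j : ℕ) ≤ c → ∀ t : Fin n,
      A j t = if (j : ℕ) - 1 = (t : ℕ) then 1 else 0 := by
    intro j hj1 hjc t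
    have hjn : (j : ℕ) - 1 < n := by omega
    set i : Fin n := ⟨(j : ℕ) - 1, hjn⟩ with hidef
    have hiv : (i : ℕ) = (j : ℕ) - 1 := rfl
    have hEi : ∀ s : Fin n, E i s = if s = j then 1 else 0 := by
      intro s
      rw [hrow i (by omega) s]
      congr 1
      rw [eq_iff_iff, Fin.ext_iff]
      omega
    have hone := congrFun (congrFun hEA i) t
    rw [Matrix.mul_apply] at hone
    simp only [hEi, ite_mul, one_mul, zero_mul] at hone
    rw [Finset.sum_ite_eq' Finset.univ j (fun s => A s t), if_pos (Finset.mem_univ _)] at hone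
    rw [hone, Matrix.one_apply]
    have hit : (i = t) ↔ ((j : ℕ) - 1 = (t : ℕ)) :=
      ⟨fun h => h ▸ hiv.symm, fun h => Fin.ext (hiv.trans h)⟩
    simp only [hit]
  have hA10 : A i1 i0 = 1 := by
    rw [hArow i1 (by omega) (by omega) i0]
    norm_num
  -- position of -b₁ : k = n-2 has r = n-1, col = 1
  have hkn2 : r (n - 2) = il ∧ col (n - 2) = i1 := by
    have e1 := h1 (n - 2) le_rfl
    have e3 := (h3 (n - 2) le_rfl).1
    have hrlt := (r (n - 2)).isLt
    exact ⟨Fin.ext (by omega), Fin.ext (by omega)⟩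
  have hEl1 : E il i1 = -(a (n - 1) / a 0) := by
    have h4' := h4 (n - 2) le_rfl
    rw [hkn2.1, hkn2.2] at h4'
    rw [h4', show n - 1 - (n - 2) = 1 from by omega]
    simp [asharp]
  have hEl0 : E il i0 = -(1 / a 0) := by
    rw [h6 il i0 hilv hi0v]
    simp [asharp]
  -- A₀₀ = -a_{n-1}
  have hA00 : A i0 i0 = -a (n - 1) := by
    have hone := congrFun (congrFun hEA il) i0
    rw [Matrix.mul_apply, Matrix.one_apply_ne (by rw [ne_eq, Fin.ext_iff]; omega)] at hone
    have hsum : ∑ s, E il s * A s i0 = E il i0 * A i0 i0 + E il i1 * A i1 i0 := by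
      have hstep : ∑ s, E il s * A s i0 = ∑ s ∈ ({i0, i1} : Finset (Fin n)), E il s * A s i0 := by
        symm
        apply Finset.sum_subset (Finset.subset_univ _)
        intro s _ hs
        simp only [Finset.mem_insert, Finset.mem_singleton] at hs
        push_neg at hs
        obtain ⟨hs0, hs1⟩ := hs
        have hs0' : (s : ℕ) ≠ (i0 : ℕ) := fun h => hs0 (Fin.ext h)
        have hs1' : (s : ℕ) ≠ (i1 : ℕ) := fun h => hs1 (Fin.ext h)
        have hs2 : 2 ≤ (s : ℕ) := by omega
        by_cases hsc : (s : ℕ) ≤ c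
        · rw [hArow s (by omega) hsc i0, if_neg (by omega), mul_zero]
        · rw [h7 il s (by omega) (by omega) ?_, zero_mul]
          intro k hk ⟨hrk, hck⟩
          have e3 := (h3 k hk).2
          rw [hck] at e3; omega
      rw [hstep, Finset.sum_pair (show i0 ≠ i1 by rw [ne_eq, Fin.ext_iff]; omega)]
    rw [hsum, hEl0, hEl1, hA10] at hone
    have h8 : (1 / a 0) * (A i0 i0 + a (n - 1)) = 0 := by linear_combination -hone
    rcases mul_eq_zero.mp h8 with h9 | h9
    · exact absurd h9 (by simp [ha])
    · linear_combination h9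
  -- A₀,ₙ₋₁ = -a₀
  have hA0l : A i0 il = -a 0 := by
    have hone := congrFun (congrFun hAEone i0) i0
    rw [Matrix.mul_apply] at hone
    have hsum : ∑ s, A i0 s * E s i0 = A i0 il * E il i0 := by
      apply Finset.sum_eq_single il
      · intro s _ hs
        rw [ne_eq, Fin.ext_iff] at hs
        rw [h7 s i0 (by omega) (by omega) ?_, mul_zero]
        intro k hk ⟨hrk, hck⟩
        have e3 := (h3 k hk).1
        rw [hck] at e3; omega
      · intro h; exact absurd (Finset.mem_univ il) h
    rw [hsum, hEl0, Matrix.one_apply_eq] at hone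
    have hkey : (1 / a 0) * a 0 = 1 := by field_simp
    have h8 : A i0 il * (1 / a 0) = -1 := by linear_combination -hone
    calc A i0 il = (A i0 il * (1 / a 0)) * a 0 := by rw [mul_assoc, hkey, mul_one]
      _ = -a 0 := by rw [h8]; ring
  -- norm lower bounds for A
  haveI : Nonempty (Fin n) := ⟨i0⟩
  have habs00 : ‖A i0 i0‖ = M := by rw [hA00, norm_neg]; exact han
  have habs0l : ‖A i0 il‖ = ‖a 0‖ := by rw [hA0l, norm_neg]
  have habs10 : ‖A i1 i0‖ = 1 := by rw [hA10, norm_one]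
  have hinfA : ‖a 0‖ + M ≤ infNorm A := by
    refine le_trans ?_ (le_ciSup (Finite.bddAbove_range _) i0)
    calc ‖a 0‖ + M
        = ∑ j ∈ {i0, il}, ‖A i0 j‖ := by
          rw [Finset.sum_pair (show i0 ≠ il by rw [ne_eq, Fin.ext_iff]; omega),
            habs00, habs0l]; ring
      _ ≤ ∑ j, ‖A i0 j‖ :=
          Finset.sum_le_sum_of_subset_of_nonneg (Finset.subset_univ _)
            (fun j _ _ => norm_nonneg _)
  have honeA1 : 1 + M ≤ oneNorm A := by
    refine le_trans ?_ (le_ciSup (Finite.bddAbove_range _) i0)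
    calc 1 + M
        = ∑ i ∈ {i0, i1}, ‖A i i0‖ := by
          rw [Finset.sum_pair (show i0 ≠ i1 by rw [ne_eq, Fin.ext_iff]; omega),
            habs00, habs10]; ring
      _ ≤ ∑ i, ‖A i i0‖ :=
          Finset.sum_le_sum_of_subset_of_nonneg (Finset.subset_univ _)
            (fun i _ _ => norm_nonneg _)
  have honeA2 : ‖a 0‖ ≤ oneNorm A := by
    have hstep : ‖a 0‖ ≤ ∑ i, ‖A i il‖ := by
      rw [← habs0l]
      exact Finset.single_le_sum (f := fun i => ‖A i il‖)
        (fun i _ => norm_nonneg _) (Finset.mem_univ i0)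
    exact le_trans hstep
      (le_ciSup (f := fun j : Fin n => ∑ i, ‖A i j‖) (Finite.bddAbove_range _) il)
  -- each column sum of F is at most N(A)
  have hcolF : ∀ j : Fin n, ∑ i, ‖(Frob n a) i j‖ ≤ NN A := by
    intro j
    by_cases hj : (j : ℕ) = 0
    · have hsum : ∑ i, ‖(Frob n a) i j‖ = ‖a 0‖ := by
        rw [Finset.sum_eq_single il]
        · have hF : Frob n a il j = -a (j : ℕ) := by
            simp only [Frob, Matrix.of_apply]
            rw [if_neg (by omega)]
            simp [hilv]
          rw [hF, norm_neg, hj]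
        · intro i _ hi
          rw [ne_eq, Fin.ext_iff] at hi
          have hF : Frob n a i j = 0 := by
            simp only [Frob, Matrix.of_apply]
            rw [if_neg (by omega), if_neg (by omega)]
          rw [hF, norm_zero]
        · intro h; exact absurd (Finset.mem_univ il) h
      rw [hsum]
      exact le_min (le_trans (by linarith) hinfA) honeA2
    · have hjlt := j.isLt
      set ij : Fin n := ⟨(j : ℕ) - 1, by omega⟩ with hijdef
      have hijv : (ij : ℕ) = (j : ℕ) - 1 := rfl
      have hijne : ij ≠ il := by rw [ne_eq, Fin.ext_iff]; omega
      have hsum : ∑ i, ‖(Frob n a) i j‖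
          = 1 + ‖a (j : ℕ)‖ := by
        have hpair : ∑ i ∈ {ij, il}, ‖(Frob n a) i j‖
            = 1 + ‖a (j : ℕ)‖ := by
          rw [Finset.sum_pair hijne]
          have hF1 : Frob n a ij j = 1 := by
            simp only [Frob, Matrix.of_apply]
            rw [if_pos (by omega)]
          have hF2 : Frob n a il j = -a (j : ℕ) := by
            simp only [Frob, Matrix.of_apply]
            rw [if_neg (by omega)]
            simp [hilv]
          rw [hF1, hF2, norm_one, norm_neg]
        rw [← hpair]
        symm
        apply Finset.sum_subset (Finset.subset_univ _)
        intro i _ hi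
        simp only [Finset.mem_insert, Finset.mem_singleton] at hi
        push_neg at hi
        obtain ⟨hia, hib⟩ := hi
        rw [ne_eq, Fin.ext_iff] at hia hib
        have hF : Frob n a i j = 0 := by
          simp only [Frob, Matrix.of_apply]
          rw [if_neg (by omega), if_neg (by omega)]
        rw [hF, norm_zero]
      rw [hsum]
      have hjM : ‖a (j : ℕ)‖ ≤ M := hMub _ (by omega) (by omega)
      exact le_min (le_trans (by linarith) hinfA) (le_trans (by linarith) honeA1)
  calc NN (Frob n a) ≤ oneNorm (Frob n a) := min_le_right _ _
    _ ≤ NN A := ciSup_le hcolF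


end
end

section
/- Suppose n ≥ 3, 1 ≤ c ≤ n−2, 0 < |a_0| < 1, and A is a matrix of type E_c(p♯)^{−1}. Then (i) N(F) − ‖A‖_∞ ≤ 1, (ii) N(F) ≤ 2‖A‖_∞, and (iii) N(F) ≤ ‖A‖_1, where F is the Frobenius companion matrix of p. -/
noncomputable section

namespace Stmt14Aux
open Matrix Finset

def Tup (n : ℕ) : Matrix (Fin n) (Fin n) ℂ :=
  Matrix.of fun i j => if (j : ℕ) = (i : ℕ) + 1 then 1 else 0

def Tdn (n : ℕ) : Matrix (Fin n) (Fin n) ℂ :=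
  Matrix.of fun i j => if (i : ℕ) = (j : ℕ) + 1 then 1 else 0

def rho {n : ℕ} (r : ℕ → Fin n) (k : ℕ) : Fin n :=
  ⟨if (r k : ℕ) = n - 1 then 0 else (r k : ℕ) + 1, by
    have := (r k).isLt; split <;> omega⟩

def gam {n : ℕ} (col : ℕ → Fin n) (k : ℕ) : Fin n :=
  ⟨(col k : ℕ) - 1, by have := (col k).isLt; omega⟩

lemma mul_std_apply {n : ℕ} (M : Matrix (Fin n) (Fin n) ℂ) (i j : Fin n) (v : ℂ) (p q : Fin n) :
    (M * Matrix.single i j v) p q = M p i * (if j = q then v else 0) := by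
  rw [Matrix.mul_apply]
  rw [Finset.sum_eq_single i]
  · simp [Matrix.single]
  · intro b _ hb
    simp [Matrix.single, (Ne.symm hb)]
  · simp

lemma std_mul_apply {n : ℕ} (M : Matrix (Fin n) (Fin n) ℂ) (i j : Fin n) (v : ℂ) (p q : Fin n) :
    (Matrix.single i j v * M) p q = (if i = p then v else 0) * M j q := by
  rw [Matrix.mul_apply]
  rw [Finset.sum_eq_single j]
  · simp [Matrix.single]
  · intro b _ hb
    simp [Matrix.single, (Ne.symm hb)]
  · simp

lemma Tdn_mul_std {n : ℕ} (i j i' : Fin n) (h : (i' : ℕ) = (i : ℕ) + 1) (v : ℂ) :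
    Tdn n * Matrix.single i j v = Matrix.single i' j v := by
  ext p q
  rw [mul_std_apply]
  simp only [Tdn, Matrix.of_apply, Matrix.single, Fin.ext_iff]
  split_ifs <;> simp_all <;> omega

lemma Tdn_mul_std_last {n : ℕ} (i j : Fin n) (h : (i : ℕ) = n - 1) (v : ℂ) :
    Tdn n * Matrix.single i j v = 0 := by
  ext p q
  rw [mul_std_apply]
  have hp := p.isLt
  simp only [Tdn, Matrix.of_apply]
  rw [if_neg (by omega)]
  simp

lemma std_mul_Tup {n : ℕ} (i j j' : Fin n) (h : (j' : ℕ) = (j : ℕ) + 1) (v : ℂ) :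
    Matrix.single i j v * Tup n = Matrix.single i j' v := by
  ext p q
  rw [std_mul_apply]
  simp only [Tup, Matrix.of_apply, Matrix.single, Fin.ext_iff]
  split_ifs <;> simp_all <;> omega

lemma std_mul_Tup_last {n : ℕ} (i j : Fin n) (h : (j : ℕ) = n - 1) (v : ℂ) :
    Matrix.single i j v * Tup n = 0 := by
  ext p q
  rw [std_mul_apply]
  have hq := q.isLt
  have : ¬((q : ℕ) = (j : ℕ) + 1) := by omega
  simp [Tup, this]

lemma Tdn_mul_Tup {n : ℕ} (hn : 0 < n) :
    Tdn n * Tup n = 1 - Matrix.single (⟨0, hn⟩ : Fin n) (⟨0, hn⟩ : Fin n) 1 := by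
  ext p q
  rw [Matrix.mul_apply]
  by_cases hp : (p : ℕ) = 0
  · rw [Finset.sum_eq_zero]
    · simp only [Matrix.sub_apply, Matrix.one_apply, Matrix.single, Matrix.of_apply,
        Fin.ext_iff, Fin.val_mk, hp]
      by_cases hq : (q : ℕ) = 0 <;> simp [hq]
    · intro l _
      simp only [Tdn, Matrix.of_apply]
      rw [if_neg (by omega)]
      simp
  · have hplt := p.isLt
    rw [Finset.sum_eq_single (⟨(p : ℕ) - 1, by omega⟩ : Fin n)]
    · simp only [Tdn, Tup, Matrix.of_apply, Matrix.sub_apply, Matrix.one_apply,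
        Matrix.single, Fin.ext_iff, Fin.val_mk]
      rw [if_pos (by omega)]
      by_cases hq : (q : ℕ) = (p : ℕ)
      · rw [if_pos (by omega), if_pos (by omega), if_neg (by omega)]
        norm_num
      · rw [if_neg (by omega), if_neg (by omega), if_neg (by omega)]
        norm_num
    · intro l _ hl
      by_cases hpl : (p : ℕ) = (l : ℕ) + 1
      · exact absurd (Fin.ext (show (l : ℕ) = (p : ℕ) - 1 by omega)) hl
      · simp [Tdn, hpl]
    · simp


theorem core {n : ℕ} (c : ℕ) (hn : 3 ≤ n) (hc1 : 1 ≤ c) (hc2 : c ≤ n - 2) (a : ℕ → ℂ)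
    (h0 : 0 < ‖a 0‖) (h1 : ‖a 0‖ < 1)
    (E : Matrix (Fin n) (Fin n) ℂ) (r col : ℕ → Fin n)
    (p1 : ∀ k : ℕ, k ≤ n - 2 → (r k : ℕ) = (col k : ℕ) + k)
    (p2 : ∀ k : ℕ, k ≤ n - 2 → c ≤ (r k : ℕ))
    (p3 : ∀ k : ℕ, k ≤ n - 2 → 1 ≤ (col k : ℕ) ∧ (col k : ℕ) ≤ c)
    (p4 : ∀ k : ℕ, k ≤ n - 2 → E (r k) (col k) = -asharp n a (n - 1 - k))
    (p5 : ∀ i j : Fin n, (j : ℕ) = (i : ℕ) + 1 → E i j = 1)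
    (p6 : ∀ i j : Fin n, (i : ℕ) = n - 1 → (j : ℕ) = 0 → E i j = -asharp n a 0)
    (p7 : ∀ i j : Fin n, (j : ℕ) ≠ (i : ℕ) + 1 → ¬((i : ℕ) = n - 1 ∧ (j : ℕ) = 0) →
      (∀ k : ℕ, k ≤ n - 2 → ¬(r k = i ∧ col k = j)) → E i j = 0) :
    1 ≤ infNorm E⁻¹ ∧ 1 ≤ oneNorm E⁻¹ ∧
      ∀ j : ℕ, 1 ≤ j → j ≤ n - 1 →
        ‖a j‖ ≤ infNorm E⁻¹ ∧ 1 + ‖a j‖ ≤ oneNorm E⁻¹ := by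
  have hn0 : 0 < n := by omega
  have ha0 : a 0 ≠ 0 := by
    intro h; rw [h] at h0; simp at h0
  set f0 : Fin n := ⟨0, hn0⟩ with hf0
  set fl : Fin n := ⟨n - 1, by omega⟩ with hfl
  have hrhoval : ∀ k, (rho r k : ℕ) = if (r k : ℕ) = n - 1 then 0 else (r k : ℕ) + 1 :=
    fun k => rfl
  have hgamval : ∀ k, (gam col k : ℕ) = (col k : ℕ) - 1 := fun k => rfl
  set v : ℕ → ℂ := fun k => if (r k : ℕ) = n - 1 then -a (k + 1) else a (k + 1) / a 0 with hv
  set B : Matrix (Fin n) (Fin n) ℂ :=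
    Tdn n + Matrix.single f0 fl (-a 0) +
      ∑ k ∈ Finset.range (n - 1), Matrix.single (rho r k) (gam col k) (v k) with hB
  -- the decomposition of E
  have hE : E = Tup n + Matrix.single fl f0 (-(1 / a 0)) +
      ∑ k ∈ Finset.range (n - 1), Matrix.single (r k) (col k) (-(a (k + 1)) / a 0) := by
    ext i j
    simp only [Matrix.add_apply, Matrix.sum_apply, Tup, Matrix.of_apply, Matrix.single]
    by_cases hsd : (j : ℕ) = (i : ℕ) + 1
    · rw [p5 i j hsd, if_pos hsd, if_neg (by
        rintro ⟨-, e2⟩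
        have h5 : (0 : ℕ) = (j : ℕ) := congrArg Fin.val e2
        omega), Finset.sum_eq_zero (fun k hk => by
          rw [if_neg]
          rintro ⟨e1, e2⟩
          have hk' : k ≤ n - 2 := by have := Finset.mem_range.mp hk; omega
          have g1 : (r k : ℕ) = (i : ℕ) := congrArg Fin.val e1
          have g2 : (col k : ℕ) = (j : ℕ) := congrArg Fin.val e2
          have := p1 k hk'
          omega)]
      norm_num
    · by_cases hc0 : (i : ℕ) = n - 1 ∧ (j : ℕ) = 0
      · obtain ⟨hi1, hj1⟩ := hc0
        rw [p6 i j hi1 hj1, if_neg hsd,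
          if_pos ⟨Fin.ext (show (n - 1 : ℕ) = (i : ℕ) by omega),
            Fin.ext (show (0 : ℕ) = (j : ℕ) by omega)⟩,
          Finset.sum_eq_zero (fun k hk => by
            rw [if_neg]
            rintro ⟨-, e2⟩
            have hk' : k ≤ n - 2 := by have := Finset.mem_range.mp hk; omega
            have g2 : (col k : ℕ) = (j : ℕ) := congrArg Fin.val e2
            have := p3 k hk'
            omega)]
        norm_num [asharp]
      · by_cases hex : ∃ k, k ∈ Finset.range (n - 1) ∧ r k = i ∧ col k = j
        · obtain ⟨k, hkmem, hri, hcj⟩ := hex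
          have hk' : k ≤ n - 2 := by have := Finset.mem_range.mp hkmem; omega
          rw [if_neg hsd, if_neg (by
            rintro ⟨e1, e2⟩
            have g1 : (n - 1 : ℕ) = (i : ℕ) := congrArg Fin.val e1
            have g2 : (0 : ℕ) = (j : ℕ) := congrArg Fin.val e2
            exact hc0 ⟨g1.symm, g2.symm⟩)]
          rw [Finset.sum_eq_single k]
          · rw [← hri, ← hcj, p4 k hk', if_pos ⟨rfl, rfl⟩]
            have hne2 : n - 1 - k ≠ 0 := by omega
            have he3 : n - (n - 1 - k) = k + 1 := by omega
            simp only [asharp, if_neg hne2, he3]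
            rw [neg_div]
            ring
          · intro k' hk'mem hkne
            rw [if_neg]
            rintro ⟨e1, e2⟩
            have hk2 : k' ≤ n - 2 := by have := Finset.mem_range.mp hk'mem; omega
            apply hkne
            have g1 : (r k' : ℕ) = (r k : ℕ) := by rw [e1, hri]
            have g2 : (col k' : ℕ) = (col k : ℕ) := by rw [e2, hcj]
            have := p1 k hk'
            have := p1 k' hk2
            omega
          · intro hnm
            exact absurd hkmem hnm
        · push_neg at hex
          rw [p7 i j hsd hc0 (fun k hk =>
              fun hh => hex k (Finset.mem_range.mpr (by omega)) hh.1 hh.2), if_neg hsd, if_neg (by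
            rintro ⟨e1, e2⟩
            have g1 : (n - 1 : ℕ) = (i : ℕ) := congrArg Fin.val e1
            have g2 : (0 : ℕ) = (j : ℕ) := congrArg Fin.val e2
            exact hc0 ⟨g1.symm, g2.symm⟩), Finset.sum_eq_zero (fun k hk => by
              rw [if_neg]
              exact fun hh => hex k hk hh.1 hh.2)]
          norm_num
  -- B is a left inverse of E
  have hBE : B * E = 1 := by
    have key : ∀ k ∈ Finset.range (n - 1),
        Tdn n * Matrix.single (r k) (col k) (-(a (k + 1)) / a 0) +
          (Matrix.single f0 fl (-a 0) * Matrix.single (r k) (col k) (-(a (k + 1)) / a 0) +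
            Matrix.single (rho r k) (gam col k) (v k) * Tup n) = 0 := by
      intro k hkmem
      have hk : k ≤ n - 2 := by have := Finset.mem_range.mp hkmem; omega
      have h3 := p3 k hk
      have h2 := p2 k hk
      have hp1 := p1 k hk
      have hrlt := (r k).isLt
      have hcolval : (col k : ℕ) = (gam col k : ℕ) + 1 := by rw [hgamval]; omega
      by_cases hr : (r k : ℕ) = n - 1
      · have hrfl : r k = fl := Fin.ext hr
        have hrho0 : rho r k = f0 := Fin.ext (by rw [hrhoval, if_pos hr])
        have hvk : v k = -a (k + 1) := if_pos hr
        rw [hrfl, Tdn_mul_std_last fl (col k) rfl,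
          Matrix.single_mul_single_same,
          std_mul_Tup (rho r k) (gam col k) (col k) hcolval, hrho0, hvk,
          zero_add, ← Matrix.single_add,
          show -a 0 * (-(a (k + 1)) / a 0) + -a (k + 1) = 0 by field_simp; ring,
          Matrix.single_zero]
      · have hrho : (rho r k : ℕ) = (r k : ℕ) + 1 := by rw [hrhoval, if_neg hr]
        have hvk : v k = a (k + 1) / a 0 := if_neg hr
        rw [Tdn_mul_std (r k) (col k) (rho r k) hrho,
          Matrix.single_mul_single_of_ne (-a 0) f0 fl _
            (Fin.ne_of_val_ne (show (n - 1 : ℕ) ≠ (r k : ℕ) from fun hh => hr hh.symm)) _,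
          std_mul_Tup (rho r k) (gam col k) (col k) hcolval, hvk,
          zero_add, ← Matrix.single_add,
          show -(a (k + 1)) / a 0 + a (k + 1) / a 0 = 0 by ring,
          Matrix.single_zero]
    have e1 : Tdn n * Tup n = 1 - Matrix.single f0 f0 1 := Tdn_mul_Tup hn0
    have e2 : Tdn n * Matrix.single fl f0 (-(1 / a 0)) = 0 := Tdn_mul_std_last fl f0 rfl _
    have e3 : Matrix.single f0 fl (-a 0) * Tup n = 0 := std_mul_Tup_last f0 fl rfl _
    have e4 : Matrix.single f0 fl (-a 0) * Matrix.single fl f0 (-(1 / a 0)) =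
        Matrix.single f0 f0 1 := by
      rw [Matrix.single_mul_single_same]
      congr 1
      field_simp
    have e5 : (∑ k ∈ Finset.range (n - 1), Matrix.single (rho r k) (gam col k) (v k)) *
        Matrix.single fl f0 (-(1 / a 0)) = 0 := by
      rw [Finset.sum_mul]
      refine Finset.sum_eq_zero (fun k hkmem => ?_)
      have hk : k ≤ n - 2 := by have := Finset.mem_range.mp hkmem; omega
      have h3 := p3 k hk
      refine Matrix.single_mul_single_of_ne _ _ _ _ (Fin.ne_of_val_ne ?_) _
      rw [hgamval]
      show (col k : ℕ) - 1 ≠ n - 1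
      omega
    have e6 : (∑ k ∈ Finset.range (n - 1), Matrix.single (rho r k) (gam col k) (v k)) *
        (∑ k ∈ Finset.range (n - 1), Matrix.single (r k) (col k) (-(a (k + 1)) / a 0)) = 0 := by
      rw [Finset.sum_mul]
      refine Finset.sum_eq_zero (fun k hkmem => ?_)
      rw [Finset.mul_sum]
      refine Finset.sum_eq_zero (fun k' hk'mem => ?_)
      have hk : k ≤ n - 2 := by have := Finset.mem_range.mp hkmem; omega
      have hk' : k' ≤ n - 2 := by have := Finset.mem_range.mp hk'mem; omega
      have h3 := p3 k hk
      have h2 := p2 k' hk'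
      refine Matrix.single_mul_single_of_ne _ _ _ _ (Fin.ne_of_val_ne ?_) _
      rw [hgamval]
      omega
    have e7 : Tdn n * (∑ k ∈ Finset.range (n - 1), Matrix.single (r k) (col k) (-(a (k + 1)) / a 0)) +
        (Matrix.single f0 fl (-a 0) *
            (∑ k ∈ Finset.range (n - 1), Matrix.single (r k) (col k) (-(a (k + 1)) / a 0)) +
          (∑ k ∈ Finset.range (n - 1), Matrix.single (rho r k) (gam col k) (v k)) * Tup n) = 0 := by
      rw [Finset.mul_sum, Finset.mul_sum, Finset.sum_mul, ← Finset.sum_add_distrib,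
        ← Finset.sum_add_distrib]
      exact Finset.sum_eq_zero key
    rw [hB, hE]
    have expand : (Tdn n + Matrix.single f0 fl (-a 0) +
          ∑ k ∈ Finset.range (n - 1), Matrix.single (rho r k) (gam col k) (v k)) *
        (Tup n + Matrix.single fl f0 (-(1 / a 0)) +
          ∑ k ∈ Finset.range (n - 1), Matrix.single (r k) (col k) (-(a (k + 1)) / a 0)) =
        Tdn n * Tup n + Matrix.single f0 fl (-a 0) * Matrix.single fl f0 (-(1 / a 0)) +
          (Tdn n * (∑ k ∈ Finset.range (n - 1), Matrix.single (r k) (col k) (-(a (k + 1)) / a 0)) +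
            (Matrix.single f0 fl (-a 0) *
                (∑ k ∈ Finset.range (n - 1), Matrix.single (r k) (col k) (-(a (k + 1)) / a 0)) +
              (∑ k ∈ Finset.range (n - 1), Matrix.single (rho r k) (gam col k) (v k)) * Tup n)) +
          (Tdn n * Matrix.single fl f0 (-(1 / a 0)) + Matrix.single f0 fl (-a 0) * Tup n +
            (∑ k ∈ Finset.range (n - 1), Matrix.single (rho r k) (gam col k) (v k)) *
              Matrix.single fl f0 (-(1 / a 0)) +
            (∑ k ∈ Finset.range (n - 1), Matrix.single (rho r k) (gam col k) (v k)) *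
              (∑ k ∈ Finset.range (n - 1), Matrix.single (r k) (col k) (-(a (k + 1)) / a 0))) := by
      noncomm_ring
    rw [expand, e1, e2, e3, e4, e5, e6, e7]
    abel
  have hBinv : E⁻¹ = B := Matrix.inv_eq_left_inv hBE
  -- entries of B
  have hBgen : ∀ p q : Fin n, B p q =
      (if (p : ℕ) = (q : ℕ) + 1 then 1 else 0) +
      (if f0 = p ∧ fl = q then -a 0 else 0) +
      ∑ k ∈ Finset.range (n - 1), (if rho r k = p ∧ gam col k = q then v k else 0) := by
    intro p q
    simp [hB, Matrix.add_apply, Matrix.sum_apply, Matrix.single, Tdn]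
  have hBentry1 : B fl ⟨n - 2, by omega⟩ = 1 := by
    rw [hBgen]
    rw [if_pos (show (n - 1 : ℕ) = (n - 2 : ℕ) + 1 by omega)]
    rw [if_neg (by
      rintro ⟨e1, -⟩
      have g1 : (0 : ℕ) = n - 1 := congrArg Fin.val e1
      omega)]
    rw [Finset.sum_eq_zero (fun k hkmem => by
      rw [if_neg]
      rintro ⟨-, e2⟩
      have hk : k ≤ n - 2 := by have := Finset.mem_range.mp hkmem; omega
      have h3 := p3 k hk
      have g2 : (col k : ℕ) - 1 = n - 2 := congrArg Fin.val e2
      omega)]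
    norm_num
  have hBrho : ∀ k : ℕ, k ≤ n - 2 → B (rho r k) (gam col k) = v k := by
    intro k hk
    have h3 := p3 k hk
    have h2 := p2 k hk
    have hp1 := p1 k hk
    have hrlt := (r k).isLt
    rw [hBgen]
    have hcnd : ¬((rho r k : ℕ) = (gam col k : ℕ) + 1) := by
      rw [hrhoval, hgamval]
      split_ifs with h
      · exact not_false
      · omega
    rw [if_neg hcnd]
    rw [if_neg (by
      rintro ⟨-, e2⟩
      have g2 : (n - 1 : ℕ) = (col k : ℕ) - 1 := congrArg Fin.val e2
      omega)]
    rw [Finset.sum_eq_single k]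
    · rw [if_pos ⟨rfl, rfl⟩]
      norm_num
    · intro k' hk'mem hkne
      rw [if_neg]
      rintro ⟨e1, e2⟩
      have hk2 : k' ≤ n - 2 := by have := Finset.mem_range.mp hk'mem; omega
      have h3' := p3 k' hk2
      have hp1' := p1 k' hk2
      have hrlt' := (r k').isLt
      apply hkne
      have g1 : (rho r k' : ℕ) = (rho r k : ℕ) := congrArg Fin.val e1
      have g2 : (gam col k' : ℕ) = (gam col k : ℕ) := congrArg Fin.val e2
      rw [hrhoval, hrhoval] at g1
      rw [hgamval, hgamval] at g2
      split_ifs at g1 <;> omega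
    · intro hnm
      exact absurd (Finset.mem_range.mpr (by omega)) hnm
  have hBcol : ∀ k : ℕ, k ≤ n - 2 → B (col k) (gam col k) = 1 := by
    intro k hk
    have h3 := p3 k hk
    rw [hBgen]
    rw [if_pos (show (col k : ℕ) = (gam col k : ℕ) + 1 by rw [hgamval]; omega)]
    rw [if_neg (by
      rintro ⟨e1, -⟩
      have g1 : (0 : ℕ) = (col k : ℕ) := congrArg Fin.val e1
      omega)]
    rw [Finset.sum_eq_zero (fun k' hk'mem => by
      rw [if_neg]
      rintro ⟨e1, -⟩
      have hk2 : k' ≤ n - 2 := by have := Finset.mem_range.mp hk'mem; omega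
      have h2' := p2 k' hk2
      have hrlt' := (r k').isLt
      have g1 : (rho r k' : ℕ) = (col k : ℕ) := congrArg Fin.val e1
      rw [hrhoval] at g1
      split_ifs at g1 <;> omega)]
    norm_num
  have hnecolrho : ∀ k : ℕ, k ≤ n - 2 → col k ≠ rho r k := by
    intro k hk
    have h3 := p3 k hk
    have h2 := p2 k hk
    apply Fin.ne_of_val_ne
    rw [hrhoval]
    split <;> omega
  have hvabs : ∀ k : ℕ, k ≤ n - 2 → ‖a (k + 1)‖ ≤ ‖v k‖ := by
    intro k hk
    have hvk : v k = if (r k : ℕ) = n - 1 then -a (k + 1) else a (k + 1) / a 0 := rfl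
    rw [hvk]
    split
    · simp
    · rw [norm_div]
      rw [le_div_iff₀ h0]
      exact mul_le_of_le_one_right (norm_nonneg _) h1.le
  -- norm lower bounds
  have hrowle : ∀ p q : Fin n, ‖B p q‖ ≤ infNorm B := by
    intro p q
    refine le_trans (Finset.single_le_sum (f := fun j => ‖B p j‖)
      (fun j _ => norm_nonneg _) (Finset.mem_univ q)) ?_
    exact le_ciSup (f := fun i => ∑ j, ‖B i j‖)
      (Set.Finite.bddAbove (Set.finite_range _)) p
  have hinf1 : (1 : ℝ) ≤ infNorm B := by
    have := hrowle fl ⟨n - 2, by omega⟩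
    rw [hBentry1] at this
    simpa using this
  have hcolle2 : ∀ k : ℕ, k ≤ n - 2 →
      1 + ‖v k‖ ≤ oneNorm B := by
    intro k hk
    have hsub : ({col k, rho r k} : Finset (Fin n)) ⊆ Finset.univ := Finset.subset_univ _
    have hpair : ∑ i ∈ ({col k, rho r k} : Finset (Fin n)),
        ‖B i (gam col k)‖ =
        ‖B (col k) (gam col k)‖ + ‖B (rho r k) (gam col k)‖ :=
      Finset.sum_pair (hnecolrho k hk)
    have hle : ∑ i ∈ ({col k, rho r k} : Finset (Fin n)), ‖B i (gam col k)‖ ≤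
        ∑ i, ‖B i (gam col k)‖ :=
      Finset.sum_le_sum_of_subset_of_nonneg hsub (fun i _ _ => norm_nonneg _)
    rw [hpair, hBcol k hk, hBrho k hk] at hle
    rw [norm_one] at hle
    refine le_trans hle ?_
    exact le_ciSup (f := fun q => ∑ i, ‖B i q‖)
      (Set.Finite.bddAbove (Set.finite_range _)) (gam col k)
  have hone1 : (1 : ℝ) ≤ oneNorm B := by
    have hle : ‖B fl ⟨n - 2, by omega⟩‖ ≤
        ∑ i, ‖B i ⟨n - 2, by omega⟩‖ :=
      Finset.single_le_sum (f := fun i => ‖B i (⟨n - 2, by omega⟩ : Fin n)‖)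
        (fun i _ => norm_nonneg _) (Finset.mem_univ fl)
    rw [hBentry1, norm_one] at hle
    refine le_trans hle ?_
    exact le_ciSup (f := fun q => ∑ i, ‖B i q‖)
      (Set.Finite.bddAbove (Set.finite_range _)) _
  rw [hBinv]
  refine ⟨hinf1, hone1, ?_⟩
  intro j hj1 hj2
  set k := j - 1 with hkdef
  have hk : k ≤ n - 2 := by omega
  have hjk : j = k + 1 := by omega
  constructor
  · have := hrowle (rho r k) (gam col k)
    rw [hBrho k hk] at this
    rw [hjk]
    exact le_trans (hvabs k hk) this
  · rw [hjk]
    exact le_trans (by have := hvabs k hk; linarith) (hcolle2 k hk)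

end Stmt14Aux

/-- if `n ≥ 3`, `1 ≤ c ≤ n-2`, `0 < |a_0| < 1` and `A` is of type
`E_c(p♯)⁻¹`, then (i) `N(F) - ‖A‖_∞ ≤ 1`, (ii) `N(F) ≤ 2‖A‖_∞`, and
(iii) `N(F) ≤ ‖A‖_1`. -/
theorem stmt14 (n c : ℕ) (hn : 3 ≤ n) (hc1 : 1 ≤ c) (hc2 : c ≤ n - 2)
    (a : ℕ → ℂ) (h0 : 0 < ‖a 0‖) (h1 : ‖a 0‖ < 1)
    (A : Matrix (Fin n) (Fin n) ℂ) (hA : IsTypeEInv n c a A) :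
    NN (Frob n a) - infNorm A ≤ 1 ∧
    NN (Frob n a) ≤ 2 * infNorm A ∧
    NN (Frob n a) ≤ oneNorm A := by
  obtain ⟨E, hE, hAE⟩ := hA
  obtain ⟨r, col, p1, p2, p3, p4, p5, p6, p7⟩ := hE
  obtain ⟨hinf1, hone1, hcoef⟩ :=
    Stmt14Aux.core c hn hc1 hc2 a h0 h1 E r col p1 p2 p3 p4 p5 p6 p7
  rw [← hAE] at hinf1 hone1 hcoef
  haveI : Nonempty (Fin n) := ⟨⟨0, by omega⟩⟩
  have hcol0 : ∀ j : Fin n, (j : ℕ) = 0 → (∑ i, ‖Frob n a i j‖) ≤ 1 := by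
    intro j hj
    have hrow : ∀ i : Fin n, ‖Frob n a i j‖ =
        if i = (⟨n - 1, by omega⟩ : Fin n) then ‖a 0‖ else 0 := by
      intro i
      simp only [Frob, Matrix.of_apply]
      rw [if_neg (show ¬((j : ℕ) = (i : ℕ) + 1) by omega)]
      by_cases h2 : (i : ℕ) = n - 1
      · rw [if_pos h2, if_pos (Fin.ext h2), hj]
        simp
      · rw [if_neg h2, if_neg (fun e => h2 (congrArg Fin.val e))]
        simp
    rw [Finset.sum_congr rfl (fun i _ => hrow i), Finset.sum_ite_eq' Finset.univ,
      if_pos (Finset.mem_univ _)]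
    exact h1.le
  have hcolj : ∀ j : Fin n, 1 ≤ (j : ℕ) →
      (∑ i, ‖Frob n a i j‖) = 1 + ‖a (j : ℕ)‖ := by
    intro j hj
    have hjlt := j.isLt
    have hrow : ∀ i : Fin n, ‖Frob n a i j‖ =
        (if i = (⟨(j : ℕ) - 1, by omega⟩ : Fin n) then 1 else 0) +
        (if i = (⟨n - 1, by omega⟩ : Fin n) then ‖a (j : ℕ)‖ else 0) := by
      intro i
      have hilt := i.isLt
      simp only [Frob, Matrix.of_apply]
      by_cases hsd : (j : ℕ) = (i : ℕ) + 1
      · rw [if_pos hsd, if_pos (Fin.ext (show (i : ℕ) = (j : ℕ) - 1 by omega)),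
          if_neg (fun e => by
            have g : (i : ℕ) = n - 1 := congrArg Fin.val e
            omega)]
        simp
      · rw [if_neg hsd]
        by_cases h2 : (i : ℕ) = n - 1
        · rw [if_pos h2,
            if_pos (show i = (⟨n - 1, by omega⟩ : Fin n) from Fin.ext h2),
            if_neg (show ¬(i = (⟨(j : ℕ) - 1, by omega⟩ : Fin n)) from fun e => by
              have g : (i : ℕ) = (j : ℕ) - 1 := congrArg Fin.val e
              omega)]
          simp
        · rw [if_neg h2, if_neg (fun e => by
            have g : (i : ℕ) = (j : ℕ) - 1 := congrArg Fin.val e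
            omega), if_neg (fun e => h2 (congrArg Fin.val e))]
          simp
    rw [Finset.sum_congr rfl (fun i _ => hrow i), Finset.sum_add_distrib,
      Finset.sum_ite_eq' Finset.univ, Finset.sum_ite_eq' Finset.univ,
      if_pos (Finset.mem_univ _), if_pos (Finset.mem_univ _)]
  have hmain : ∀ t : ℝ, 1 ≤ t →
      (∀ j : ℕ, 1 ≤ j → j ≤ n - 1 → 1 + ‖a j‖ ≤ t) →
      NN (Frob n a) ≤ t := by
    intro t ht1 ht2
    refine le_trans (min_le_right _ _) ?_
    refine ciSup_le (fun j => ?_)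
    by_cases hj : (j : ℕ) = 0
    · exact le_trans (hcol0 j hj) ht1
    · rw [hcolj j (by omega)]
      exact ht2 (j : ℕ) (by omega) (by have := j.isLt; omega)
  refine ⟨?_, ?_, ?_⟩
  · have := hmain (1 + infNorm A) (by linarith)
      (fun j hj1 hj2 => by have := (hcoef j hj1 hj2).1; linarith)
    linarith
  · exact hmain (2 * infNorm A) (by linarith)
      (fun j hj1 hj2 => by have := (hcoef j hj1 hj2).1; linarith)
  · exact hmain (oneNorm A) hone1 (fun j hj1 hj2 => (hcoef j hj1 hj2).2)

end
end

section
/- Suppose |a_0| > 1 and let F be the Frobenius companion matrix of p. If N(F) < ‖W‖_∞, then ‖W‖_∞ < 2·N(F). -/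
noncomputable section

lemma sum_le_pair_aux {n : ℕ} (f : Fin n → ℝ) (c₁ c₂ : Fin n) (v₁ v₂ : ℝ)
    (h : ∀ j, f j ≤ (if j = c₁ then v₁ else 0) + (if j = c₂ then v₂ else 0)) :
    ∑ j, f j ≤ v₁ + v₂ := by
  have h2 : ∑ j, f j ≤ ∑ j, ((if j = c₁ then v₁ else 0) + (if j = c₂ then v₂ else 0)) :=
    Finset.sum_le_sum fun j _ => h j
  simpa [Finset.sum_add_distrib, Finset.sum_ite_eq'] using h2

lemma pair_le_sum_aux {n : ℕ} (f : Fin n → ℝ) (hf : ∀ j, 0 ≤ f j) (c₁ c₂ : Fin n)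
    (hne : c₁ ≠ c₂) : f c₁ + f c₂ ≤ ∑ j, f j := by
  have h := Finset.sum_le_sum_of_subset_of_nonneg (Finset.subset_univ {c₁, c₂})
    (fun j _ _ => hf j)
  rwa [Finset.sum_pair hne] at h

/-- if `|a_0| > 1` and `N(F) < ‖W‖_∞`, then `‖W‖_∞ < 2·N(F)`. -/
theorem stmt16 (n : ℕ) (hn : 2 ≤ n) (a : ℕ → ℂ) (ha : a 0 ≠ 0)
    (ha0 : 1 < ‖a 0‖)
    (hlt : NN (Frob n a) < infNorm (Wmat n a)) :
    infNorm (Wmat n a) < 2 * NN (Frob n a) := by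
  have hnpos : 0 < n := by omega
  haveI : Nonempty (Fin n) := ⟨⟨0, hnpos⟩⟩
  obtain ⟨L, hL⟩ : ∃ L : Fin n, (L : ℕ) = n - 1 := ⟨⟨n - 1, by omega⟩, rfl⟩
  obtain ⟨Z, hZ⟩ : ∃ Z : Fin n, (Z : ℕ) = 0 := ⟨⟨0, hnpos⟩, rfl⟩
  set N := NN (Frob n a) with hNdef
  have habs0 : (0 : ℝ) < ‖a 0‖ := by linarith
  -- entries of F
  have hF1 : ∀ i j : Fin n, (j : ℕ) = (i : ℕ) + 1 → Frob n a i j = 1 := by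
    intro i j h
    simp only [Frob, Matrix.of_apply]
    rw [if_pos h]
  have hFlast : ∀ j : Fin n, Frob n a L j = -a (j : ℕ) := by
    intro j
    have hj := j.isLt
    simp only [Frob, Matrix.of_apply]
    rw [if_neg (by omega), if_pos hL]
  have le_inf : ∀ i : Fin n, ∑ j, ‖Frob n a i j‖ ≤ infNorm (Frob n a) := by
    intro i
    unfold infNorm
    exact le_ciSup (f := fun i : Fin n => ∑ j, ‖Frob n a i j‖)
      (Set.finite_range _).bddAbove i
  have le_one : ∀ j : Fin n, ∑ i, ‖Frob n a i j‖ ≤ oneNorm (Frob n a) := by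
    intro j
    unfold oneNorm
    exact le_ciSup (f := fun j : Fin n => ∑ i, ‖Frob n a i j‖)
      (Set.finite_range _).bddAbove j
  have hinf : ∑ j : Fin n, ‖a (j : ℕ)‖ ≤ infNorm (Frob n a) := by
    have he : ∑ j : Fin n, ‖Frob n a L j‖ = ∑ j : Fin n, ‖a (j : ℕ)‖ :=
      Finset.sum_congr rfl fun j _ => by rw [hFlast]; simp
    exact he ▸ le_inf L
  have hcol0 : ‖a 0‖ ≤ oneNorm (Frob n a) := by
    have h2 := Finset.single_le_sum (f := fun i => ‖Frob n a i Z‖)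
      (fun i _ => norm_nonneg _) (Finset.mem_univ L)
    rw [hFlast, hZ] at h2
    simp only [norm_neg] at h2 ⊢
    simpa using h2.trans (le_one Z)
  have hcolj : ∀ j : Fin n, 1 ≤ (j : ℕ) →
      1 + ‖a (j : ℕ)‖ ≤ oneNorm (Frob n a) := by
    intro j hj
    have hjlt := j.isLt
    obtain ⟨P, hP⟩ : ∃ P : Fin n, (P : ℕ) = (j : ℕ) - 1 := ⟨⟨_, by omega⟩, rfl⟩
    have hne : P ≠ L := by
      intro h
      rw [h, hL] at hP
      omega
    have hpair := pair_le_sum_aux (fun i => ‖Frob n a i j‖)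
      (fun _ => norm_nonneg _) P L hne
    rw [hF1 P j (by omega), hFlast j] at hpair
    simp only [norm_one, norm_neg] at hpair
    exact (by simpa using hpair : 1 + ‖a (j : ℕ)‖ ≤ _).trans (le_one j)
  -- lower bounds for N
  have hN0 : ‖a 0‖ ≤ N := by
    refine le_min ?_ hcol0
    have h := Finset.single_le_sum (f := fun k : Fin n => ‖a (k : ℕ)‖)
      (fun k _ => norm_nonneg _) (Finset.mem_univ Z)
    rw [hZ] at h
    exact h.trans hinf
  have hN1 : 1 < N := lt_of_lt_of_le ha0 hN0
  have hNj : ∀ j : Fin n, 1 ≤ (j : ℕ) → 1 + ‖a (j : ℕ)‖ ≤ N := by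
    intro j hj
    refine le_min ?_ (hcolj j hj)
    have hne : Z ≠ j := by
      intro h
      rw [← h, hZ] at hj
      omega
    have h := pair_le_sum_aux (fun k : Fin n => ‖a (k : ℕ)‖)
      (fun _ => norm_nonneg _) Z j hne
    rw [hZ] at h
    linarith [hinf]
  -- upper bound on row 0 of W
  have hW0 : ∑ j, ‖Wmat n a Z j‖
      ≤ ‖a (n - 1)‖ + ‖a 0‖ := by
    refine sum_le_pair_aux _ Z L _ _ ?_
    intro j
    have hjlt := j.isLt
    simp only [Wmat, Matrix.of_apply]
    by_cases h1 : (j : ℕ) = 0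
    · rw [if_pos ⟨hZ, h1⟩, if_pos (Fin.ext (by omega) : j = Z),
        if_neg (by intro h; subst h; omega)]
      simp
    · by_cases h2 : (j : ℕ) = n - 1
      · rw [if_neg (by omega), if_pos ⟨hZ, h2⟩, if_neg (by intro h; subst h; omega),
          if_pos (Fin.ext (by omega) : j = L)]
        simp
      · rw [if_neg (by omega), if_neg (by omega), if_neg (by omega), if_neg (by omega),
          if_neg (by intro h; subst h; omega), if_neg (by intro h; subst h; omega)]
        simp
  -- upper bound on rows i ≥ 1 of W
  have hWi : ∀ i : Fin n, 1 ≤ (i : ℕ) →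
      ∑ j, ‖Wmat n a i j‖
        ≤ 1 + ‖a ((i : ℕ) - 1)‖ / ‖a 0‖ := by
    intro i hi
    have hilt := i.isLt
    obtain ⟨P, hP⟩ : ∃ P : Fin n, (P : ℕ) = (i : ℕ) - 1 := ⟨⟨_, by omega⟩, rfl⟩
    refine sum_le_pair_aux _ P Z _ _ ?_
    intro j
    have hjlt := j.isLt
    simp only [Wmat, Matrix.of_apply]
    rw [if_neg (by omega), if_neg (by omega)]
    by_cases h3 : (i : ℕ) = (j : ℕ) + 1
    · rw [if_pos h3, if_pos (Fin.ext (by omega) : j = P)]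
      have h5 : (0 : ℝ) ≤
          (if j = Z then ‖a ((i : ℕ) - 1)‖ / ‖a 0‖ else 0) := by
        split_ifs <;> positivity
      simp only [norm_one]
      linarith
    · rw [if_neg h3]
      by_cases h4 : 2 ≤ (i : ℕ) ∧ (j : ℕ) = 0
      · rw [if_pos h4, if_neg (by intro h; subst h; omega),
          if_pos (Fin.ext (by omega) : j = Z)]
        simp [norm_div]
      · rw [if_neg h4, if_neg (by intro h; subst h; omega),
          if_neg (by intro h; subst h; omega)]
        simp
  -- |a_{i-1}|/|a_0| ≤ N for i ≥ 1
  have hdivN : ∀ i : Fin n, 1 ≤ (i : ℕ) →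
      ‖a ((i : ℕ) - 1)‖ / ‖a 0‖ ≤ N := by
    intro i hi
    have hilt := i.isLt
    rcases eq_or_lt_of_le hi with h1 | h2
    · have he : (i : ℕ) - 1 = 0 := by omega
      rw [he, div_self (ne_of_gt habs0)]
      exact hN1.le
    · obtain ⟨P, hP⟩ : ∃ P : Fin n, (P : ℕ) = (i : ℕ) - 1 := ⟨⟨_, by omega⟩, rfl⟩
      have h6 := hNj P (by omega)
      rw [hP] at h6
      have h7 : ‖a ((i : ℕ) - 1)‖ / ‖a 0‖
          ≤ ‖a ((i : ℕ) - 1)‖ :=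
        div_le_self (norm_nonneg _) ha0.le
      linarith
  -- conclude
  have hBrows : ∀ i : Fin n, ∑ j, ‖Wmat n a i j‖
      ≤ max (1 + N) (2 * N - 1) := by
    intro i
    rcases Nat.eq_zero_or_pos (i : ℕ) with h0 | h1
    · have hie : i = Z := Fin.ext (by omega)
      rw [hie]
      refine hW0.trans (le_trans ?_ (le_max_right _ _))
      have h6 := hNj L (by omega)
      rw [hL] at h6
      linarith
    · refine (hWi i h1).trans (le_trans ?_ (le_max_left _ _))
      linarith [hdivN i h1]
  have hsup : infNorm (Wmat n a) ≤ max (1 + N) (2 * N - 1) := by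
    unfold infNorm
    exact ciSup_le hBrows
  have hmax : max (1 + N) (2 * N - 1) < 2 * N := max_lt (by linarith) (by linarith)
  linarith

end
end

section
/- Let M = max{|a_k| : 1 ≤ k ≤ n−1}. Suppose n ≥ 3, 1 < |a_0|, |a_{n−1}| < M, and β ∈ {1, …, n−2} is such that ‖X_β‖_1 ≤ ‖X_b‖_1 for all b ∈ {1, …, n−2}. If ‖X_β‖_1 belongs to the set {|a_0|, 1 + |a_{n−1}|} ∪ {1 + |a_k|/|a_0| : 1 ≤ k ≤ β−1}, then for every c with 1 ≤ c ≤ n−2 and every matrix A of type E_c(p♯)^{−1}, ‖X_β‖_1 ≤ ‖A‖_1. -/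
noncomputable section

namespace Stmt17Aux

def Bmat (n : ℕ) (a : ℕ → ℂ) (r col : ℕ → Fin n) : Matrix (Fin n) (Fin n) ℂ :=
  Matrix.of fun i m =>
    if (m : ℕ) = n - 1 then (if (i : ℕ) = 0 then -a 0 else 0)
    else (if (i : ℕ) = (m : ℕ) + 1 then 1 else 0) +
      ∑ k ∈ Finset.range (n - 1),
        (if (col k : ℕ) = (m : ℕ) + 1 then
          (if (r k : ℕ) = n - 1 then (if (i : ℕ) = 0 then -a (k + 1) else 0)
           else (if (i : ℕ) = (r k : ℕ) + 1 then a (k + 1) / a 0 else 0))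
        else 0)

theorem Bmat_apply {n : ℕ} (a : ℕ → ℂ) (r col : ℕ → Fin n) (i m : Fin n) :
    Bmat n a r col i m =
    if (m : ℕ) = n - 1 then (if (i : ℕ) = 0 then -a 0 else 0)
    else (if (i : ℕ) = (m : ℕ) + 1 then 1 else 0) +
      ∑ k ∈ Finset.range (n - 1),
        (if (col k : ℕ) = (m : ℕ) + 1 then
          (if (r k : ℕ) = n - 1 then (if (i : ℕ) = 0 then -a (k + 1) else 0)
           else (if (i : ℕ) = (r k : ℕ) + 1 then a (k + 1) / a 0 else 0))
        else 0) := rfl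

variable {n c : ℕ} {a : ℕ → ℂ} {E : Matrix (Fin n) (Fin n) ℂ} {r col : ℕ → Fin n}

theorem Eeq (hn : 3 ≤ n) (hc1 : 1 ≤ c) (hc2 : c ≤ n - 2) (ha : a 0 ≠ 0)
    (hrc : ∀ k : ℕ, k ≤ n - 2 → (r k : ℕ) = (col k : ℕ) + k)
    (hcr : ∀ k : ℕ, k ≤ n - 2 → c ≤ (r k : ℕ))
    (hcol : ∀ k : ℕ, k ≤ n - 2 → 1 ≤ (col k : ℕ) ∧ (col k : ℕ) ≤ c)
    (hEval : ∀ k : ℕ, k ≤ n - 2 → E (r k) (col k) = -asharp n a (n - 1 - k))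
    (hsup : ∀ i j : Fin n, (j : ℕ) = (i : ℕ) + 1 → E i j = 1)
    (hcorner : ∀ i j : Fin n, (i : ℕ) = n - 1 → (j : ℕ) = 0 → E i j = -asharp n a 0)
    (hzero : ∀ i j : Fin n, (j : ℕ) ≠ (i : ℕ) + 1 → ¬((i : ℕ) = n - 1 ∧ (j : ℕ) = 0) →
      (∀ k : ℕ, k ≤ n - 2 → ¬(r k = i ∧ col k = j)) → E i j = 0) :
    ∀ m j : Fin n, E m j =
      (if (j : ℕ) = (m : ℕ) + 1 then 1 else 0)
      + (if (m : ℕ) = n - 1 ∧ (j : ℕ) = 0 then -(1 / a 0) else 0)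
      + ∑ k ∈ Finset.range (n - 1),
          (if col k = j then (if r k = m then -(a (k + 1) / a 0) else 0) else 0) := by
  intro m j
  by_cases h1 : (j : ℕ) = (m : ℕ) + 1
  · rw [hsup m j h1, if_pos h1, if_neg (by omega)]
    have h3 : (∑ k ∈ Finset.range (n - 1),
        (if col k = j then (if r k = m then -(a (k + 1) / a 0) else 0) else 0)) = 0 := by
      refine Finset.sum_eq_zero fun k hk => ?_
      have hk' := Finset.mem_range.mp hk
      by_cases hc' : col k = j
      · rw [if_pos hc', if_neg]
        intro hr'
        have e1 : (col k : ℕ) = (j : ℕ) := by rw [hc']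
        have e2 : (r k : ℕ) = (m : ℕ) := by rw [hr']
        have := hrc k (by omega)
        omega
      · rw [if_neg hc']
    rw [h3]; ring
  · by_cases h2 : (m : ℕ) = n - 1 ∧ (j : ℕ) = 0
    · rw [hcorner m j h2.1 h2.2, if_neg h1, if_pos h2]
      have h3 : (∑ k ∈ Finset.range (n - 1),
          (if col k = j then (if r k = m then -(a (k + 1) / a 0) else 0) else 0)) = 0 := by
        refine Finset.sum_eq_zero fun k hk => ?_
        have hk' := Finset.mem_range.mp hk
        rw [if_neg]
        intro hc'
        have e1 : (col k : ℕ) = (j : ℕ) := by rw [hc']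
        have := (hcol k (by omega)).1
        omega
      rw [h3]
      simp [asharp]
    · by_cases h3 : ∃ k, k < n - 1 ∧ col k = j ∧ r k = m
      · obtain ⟨k₀, hk₀, hc₀, hr₀⟩ := h3
        have hE : E m j = -(a (k₀ + 1) / a 0) := by
          rw [← hc₀, ← hr₀, hEval k₀ (by omega)]
          unfold asharp
          rw [if_neg (by omega : ¬(n - 1 - k₀ = 0))]
          have e : n - (n - 1 - k₀) = k₀ + 1 := by omega
          rw [e]
        rw [hE, if_neg h1, if_neg h2]
        have hsum : (∑ k ∈ Finset.range (n - 1),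
            (if col k = j then (if r k = m then -(a (k + 1) / a 0) else 0) else 0))
            = -(a (k₀ + 1) / a 0) := by
          rw [Finset.sum_eq_single k₀]
          · rw [if_pos hc₀, if_pos hr₀]
          · intro k hk hne
            have hk' := Finset.mem_range.mp hk
            by_cases hc' : col k = j
            · rw [if_pos hc', if_neg]
              intro hr'
              apply hne
              have e1 : (col k : ℕ) = (col k₀ : ℕ) := by rw [hc', hc₀]
              have e2 : (r k : ℕ) = (r k₀ : ℕ) := by rw [hr', hr₀]
              have t1 := hrc k (by omega)
              have t2 := hrc k₀ (by omega)
              omega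
            · rw [if_neg hc']
          · intro h; exact absurd (Finset.mem_range.mpr hk₀) h
        rw [hsum]; ring
      · rw [hzero m j h1 h2 (by
          intro k hk hkc
          exact h3 ⟨k, by omega, hkc.2, hkc.1⟩), if_neg h1, if_neg h2]
        have hs : (∑ k ∈ Finset.range (n - 1),
            (if col k = j then (if r k = m then -(a (k + 1) / a 0) else 0) else 0)) = 0 := by
          refine Finset.sum_eq_zero fun k hk => ?_
          have hk' := Finset.mem_range.mp hk
          by_cases hc' : col k = j
          · rw [if_pos hc', if_neg (fun hr' => h3 ⟨k, by omega, hc', hr'⟩)]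
          · rw [if_neg hc']
        rw [hs]; ring

theorem BE_one (hn : 3 ≤ n) (ha : a 0 ≠ 0)
    (hcol : ∀ k : ℕ, k ≤ n - 2 → 1 ≤ (col k : ℕ) ∧ (col k : ℕ) ≤ c)
    (hcr : ∀ k : ℕ, k ≤ n - 2 → c ≤ (r k : ℕ))
    (hEeq : ∀ m j : Fin n, E m j =
      (if (j : ℕ) = (m : ℕ) + 1 then 1 else 0)
      + (if (m : ℕ) = n - 1 ∧ (j : ℕ) = 0 then -(1 / a 0) else 0)
      + ∑ k ∈ Finset.range (n - 1),
          (if col k = j then (if r k = m then -(a (k + 1) / a 0) else 0) else 0)) :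
    Bmat n a r col * E = 1 := by
  ext i j
  rw [Matrix.mul_apply]
  simp only [hEeq, mul_add, Finset.sum_add_distrib, Finset.mul_sum, mul_ite, mul_one, mul_zero]
  rw [Finset.sum_comm]
  have hT3 : ∀ k ∈ Finset.range (n - 1),
      (∑ m : Fin n, if col k = j then (if r k = m then
          Bmat n a r col i m * -(a (k + 1) / a 0) else 0) else 0)
      = (if col k = j then Bmat n a r col i (r k) * -(a (k + 1) / a 0) else 0) := by
    intro k _
    by_cases hck : col k = j
    · simp only [if_pos hck]
      rw [Finset.sum_ite_eq, if_pos (Finset.mem_univ _)]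
    · simp only [if_neg hck, Finset.sum_const_zero]
  rw [Finset.sum_congr rfl hT3]
  by_cases hj0 : (j : ℕ) = 0
  · have hT1 : (∑ m : Fin n, if (j : ℕ) = (m : ℕ) + 1 then Bmat n a r col i m else 0) = 0 :=
      Finset.sum_eq_zero fun m _ => if_neg (by omega)
    have hT3' : (∑ k ∈ Finset.range (n - 1),
        if col k = j then Bmat n a r col i (r k) * -(a (k + 1) / a 0) else 0) = 0 := by
      refine Finset.sum_eq_zero fun k hk => if_neg fun hck => ?_
      have := (hcol k (by have := Finset.mem_range.mp hk; omega)).1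
      have : (col k : ℕ) = (j : ℕ) := by rw [hck]
      omega
    set l : Fin n := ⟨n - 1, by omega⟩ with hl
    have hT2 : (∑ m : Fin n, if (m : ℕ) = n - 1 ∧ (j : ℕ) = 0 then
        Bmat n a r col i m * -(1 / a 0) else 0)
        = Bmat n a r col i l * -(1 / a 0) := by
      rw [Finset.sum_eq_single l]
      · rw [if_pos ⟨rfl, hj0⟩]
      · intro m _ hne
        refine if_neg fun h => hne (Fin.ext ?_)
        simp [hl, h.1]
      · intro h; exact absurd (Finset.mem_univ l) h
    rw [hT1, hT2, hT3', Bmat_apply]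
    have hll : (l : ℕ) = n - 1 := rfl
    rw [if_pos hll]
    have hij : (i = j) ↔ ((i : ℕ) = 0) := by rw [Fin.ext_iff, hj0]
    by_cases hi : (i : ℕ) = 0
    · rw [if_pos hi, Matrix.one_apply, if_pos (hij.mpr hi)]
      field_simp
      ring
    · rw [if_neg hi, Matrix.one_apply, if_neg (fun h => hi (hij.mp h))]
      ring
  · set m₀ : Fin n := ⟨(j : ℕ) - 1, by omega⟩ with hm₀
    have hm₀v : (m₀ : ℕ) = (j : ℕ) - 1 := rfl
    have hT1 : (∑ m : Fin n, if (j : ℕ) = (m : ℕ) + 1 then Bmat n a r col i m else 0)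
        = Bmat n a r col i m₀ := by
      rw [Finset.sum_eq_single m₀]
      · rw [if_pos (by omega)]
      · intro m _ hne
        refine if_neg fun h => hne (Fin.ext (by omega))
      · intro h; exact absurd (Finset.mem_univ m₀) h
    have hT2 : (∑ m : Fin n, if (m : ℕ) = n - 1 ∧ (j : ℕ) = 0 then
        Bmat n a r col i m * -(1 / a 0) else 0) = 0 :=
      Finset.sum_eq_zero fun m _ => if_neg fun h => hj0 h.2
    rw [hT1, hT2, add_zero, Bmat_apply, if_neg (c := (m₀ : ℕ) = n - 1) (by omega)]
    have hmj : (m₀ : ℕ) + 1 = (j : ℕ) := by omega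
    rw [hmj]
    have hpt : ∀ k ∈ Finset.range (n - 1),
        ((if (col k : ℕ) = (j : ℕ) then
          (if (r k : ℕ) = n - 1 then (if (i : ℕ) = 0 then -a (k + 1) else 0)
           else (if (i : ℕ) = (r k : ℕ) + 1 then a (k + 1) / a 0 else 0))
        else 0)
        + (if col k = j then Bmat n a r col i (r k) * -(a (k + 1) / a 0) else 0)) = 0 := by
      intro k hk
      have hk' := Finset.mem_range.mp hk
      by_cases hck : (col k : ℕ) = (j : ℕ)
      · have hck' : col k = j := Fin.ext hck
        rw [if_pos hck, if_pos hck']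
        by_cases hrk : (r k : ℕ) = n - 1
        · rw [if_pos hrk, Bmat_apply, if_pos hrk]
          by_cases hi : (i : ℕ) = 0
          · rw [if_pos hi, if_pos hi]; field_simp; ring
          · rw [if_neg hi, if_neg hi]; ring
        · rw [if_neg hrk, Bmat_apply, if_neg hrk]
          have hz : (∑ k' ∈ Finset.range (n - 1),
              (if (col k' : ℕ) = (r k : ℕ) + 1 then
                (if (r k' : ℕ) = n - 1 then (if (i : ℕ) = 0 then -a (k' + 1) else 0)
                 else (if (i : ℕ) = (r k' : ℕ) + 1 then a (k' + 1) / a 0 else 0))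
              else 0)) = 0 := by
            refine Finset.sum_eq_zero fun k' hk'' => if_neg fun h => ?_
            have h1 := (hcol k' (by have := Finset.mem_range.mp hk''; omega)).2
            have h2 := hcr k (by omega)
            omega
          rw [hz, add_zero]
          by_cases hi : (i : ℕ) = (r k : ℕ) + 1
          · rw [if_pos hi, if_pos hi]; ring
          · rw [if_neg hi, if_neg hi]; ring
      · rw [if_neg hck, if_neg fun h => hck (by rw [h]), add_zero]
    rw [add_assoc, ← Finset.sum_add_distrib, Finset.sum_eq_zero hpt, add_zero,
      Matrix.one_apply]
    by_cases hij : i = j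
    · rw [if_pos (by rw [hij]), if_pos hij]
    · rw [if_neg (fun h => hij (Fin.ext h)), if_neg hij]

theorem colsum_le (hn : 3 ≤ n) (A : Matrix (Fin n) (Fin n) ℂ) (m : Fin n) :
    (∑ i, ‖A i m‖) ≤ oneNorm A := by
  haveI : Nonempty (Fin n) := ⟨⟨0, by omega⟩⟩
  show (∑ i, ‖A i m‖) ≤ ⨆ j, ∑ i, ‖A i j‖
  exact le_ciSup (f := fun j : Fin n => ∑ i, ‖A i j‖)
    (Set.Finite.bddAbove (Set.finite_range _)) m

theorem abs_a0_le (hn : 3 ≤ n) : ‖a 0‖ ≤ oneNorm (Bmat n a r col) := by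
  have hl : n - 1 < n := by omega
  have h0 : 0 < n := by omega
  refine le_trans ?_ (colsum_le hn (Bmat n a r col) ⟨n - 1, hl⟩)
  have hB : Bmat n a r col ⟨0, h0⟩ ⟨n - 1, hl⟩ = -a 0 := by
    rw [Bmat_apply, if_pos rfl, if_pos rfl]
  have h2 := Finset.single_le_sum
    (f := fun i : Fin n => ‖Bmat n a r col i ⟨n - 1, hl⟩‖)
    (fun i _ => norm_nonneg _) (Finset.mem_univ (⟨0, h0⟩ : Fin n))
  simp only [hB, norm_neg] at h2
  exact h2

theorem key (hn : 3 ≤ n) (hc1 : 1 ≤ c) (hc2 : c ≤ n - 2)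
    (hrc : ∀ k : ℕ, k ≤ n - 2 → (r k : ℕ) = (col k : ℕ) + k)
    (hcr : ∀ k : ℕ, k ≤ n - 2 → c ≤ (r k : ℕ))
    (hcol : ∀ k : ℕ, k ≤ n - 2 → 1 ≤ (col k : ℕ) ∧ (col k : ℕ) ≤ c)
    (k₀ : ℕ) (hk₀ : k₀ < n - 1) :
    1 + (if (r k₀ : ℕ) = n - 1 then ‖a (k₀ + 1)‖
         else ‖a (k₀ + 1)‖ / ‖a 0‖) ≤ oneNorm (Bmat n a r col) := by
  have hk₀' : k₀ ≤ n - 2 := by omega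
  have hj1 := (hcol k₀ hk₀').1
  have hjc := (hcol k₀ hk₀').2
  have hcrk := hcr k₀ hk₀'
  have hrck := hrc k₀ hk₀'
  have hrlt := (r k₀).isLt
  set jn : ℕ := (col k₀ : ℕ) with hjn
  set m : Fin n := ⟨jn - 1, by omega⟩ with hm
  have hmv : (m : ℕ) = jn - 1 := rfl
  have hmn : ¬((m : ℕ) = n - 1) := by omega
  have hm1 : (m : ℕ) + 1 = jn := by omega
  -- B (col k₀) m = 1
  have hB1 : Bmat n a r col (col k₀) m = 1 := by
    rw [Bmat_apply, if_neg hmn, hm1]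
    have hz : (∑ k ∈ Finset.range (n - 1),
        (if (col k : ℕ) = jn then
          (if (r k : ℕ) = n - 1 then (if (col k₀ : ℕ) = 0 then -a (k + 1) else 0)
           else (if (col k₀ : ℕ) = (r k : ℕ) + 1 then a (k + 1) / a 0 else 0))
        else 0)) = 0 := by
      refine Finset.sum_eq_zero fun k hk => ?_
      have hkr := Finset.mem_range.mp hk
      by_cases hck : (col k : ℕ) = jn
      · rw [if_pos hck]
        by_cases hrk : (r k : ℕ) = n - 1
        · rw [if_pos hrk, if_neg (by omega)]
        · rw [if_neg hrk, if_neg (by have := hcr k (by omega); omega)]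
      · rw [if_neg hck]
    rw [hz, add_zero, if_pos rfl]
  by_cases hrk₀ : (r k₀ : ℕ) = n - 1
  · rw [if_pos hrk₀]
    set i₀ : Fin n := ⟨0, by omega⟩ with hi₀
    have hi₀v : (i₀ : ℕ) = 0 := rfl
    have hne : col k₀ ≠ i₀ := by
      refine fun h => ?_
      have : (col k₀ : ℕ) = (i₀ : ℕ) := congrArg Fin.val h
      omega
    have hBi : Bmat n a r col i₀ m = -a (k₀ + 1) := by
      rw [Bmat_apply, if_neg hmn, hm1, if_neg (by omega)]
      rw [Finset.sum_eq_single k₀, if_pos rfl, if_pos hrk₀, if_pos rfl, zero_add]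
      · intro k hk hne'
        have hkr := Finset.mem_range.mp hk
        by_cases hck : (col k : ℕ) = jn
        · rw [if_pos hck]
          by_cases hrk : (r k : ℕ) = n - 1
          · exfalso; have := hrc k (by omega); omega
          · rw [if_neg hrk, if_neg (by omega)]
        · rw [if_neg hck]
      · intro h; exact absurd (Finset.mem_range.mpr (by omega)) h
    have hpair : ‖Bmat n a r col (col k₀) m‖ + ‖Bmat n a r col i₀ m‖
        ≤ ∑ i, ‖Bmat n a r col i m‖ := by
      have h := Finset.sum_le_sum_of_subset_of_nonneg
        (Finset.subset_univ ({col k₀, i₀} : Finset (Fin n)))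
        (fun i _ _ => norm_nonneg (Bmat n a r col i m))
      rwa [Finset.sum_pair hne] at h
    refine le_trans ?_ (le_trans hpair (colsum_le hn _ m))
    rw [hB1, hBi, norm_one, norm_neg]
  · rw [if_neg hrk₀]
    set i₀ : Fin n := ⟨(r k₀ : ℕ) + 1, by omega⟩ with hi₀
    have hi₀v : (i₀ : ℕ) = (r k₀ : ℕ) + 1 := rfl
    have hne : col k₀ ≠ i₀ := by
      refine fun h => ?_
      have : (col k₀ : ℕ) = (i₀ : ℕ) := congrArg Fin.val h
      omega
    have hBi : Bmat n a r col i₀ m = a (k₀ + 1) / a 0 := by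
      rw [Bmat_apply, if_neg hmn, hm1, if_neg (by omega)]
      rw [Finset.sum_eq_single k₀, if_pos rfl, if_neg hrk₀, if_pos rfl, zero_add]
      · intro k hk hne'
        have hkr := Finset.mem_range.mp hk
        by_cases hck : (col k : ℕ) = jn
        · rw [if_pos hck]
          by_cases hrk : (r k : ℕ) = n - 1
          · rw [if_pos hrk, if_neg (by omega)]
          · rw [if_neg hrk, if_neg]
            intro h
            have := hrc k (by omega)
            omega
        · rw [if_neg hck]
      · intro h; exact absurd (Finset.mem_range.mpr (by omega)) h
    have hpair : ‖Bmat n a r col (col k₀) m‖ + ‖Bmat n a r col i₀ m‖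
        ≤ ∑ i, ‖Bmat n a r col i m‖ := by
      have h := Finset.sum_le_sum_of_subset_of_nonneg
        (Finset.subset_univ ({col k₀, i₀} : Finset (Fin n)))
        (fun i _ _ => norm_nonneg (Bmat n a r col i m))
      rwa [Finset.sum_pair hne] at h
    refine le_trans ?_ (le_trans hpair (colsum_le hn _ m))
    rw [hB1, hBi, norm_one, norm_div]

end Stmt17Aux

/-- suppose `n ≥ 3`, `1 < |a_0|`, `|a_{n-1}| < M`, and
`β ∈ {1, …, n-2}` minimizes `‖X_b‖_1`.  If `‖X_β‖_1` belongs to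
`{|a_0|, 1 + |a_{n-1}|} ∪ {1 + |a_k|/|a_0| : 1 ≤ k ≤ β-1}`, then
`‖X_β‖_1 ≤ ‖A‖_1` for every matrix `A` of type `E_c(p♯)⁻¹`, `1 ≤ c ≤ n-2`. -/
theorem stmt17 (n : ℕ) (hn : 3 ≤ n) (a : ℕ → ℂ) (ha : a 0 ≠ 0) (M : ℝ)
    (hM : IsGreatest ((fun k => ‖a k‖) '' (Set.Icc 1 (n - 1))) M)
    (ha0 : 1 < ‖a 0‖) (han : ‖a (n - 1)‖ < M)
    (β : ℕ) (hβ1 : 1 ≤ β) (hβ2 : β ≤ n - 2)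
    (hmin : ∀ b : ℕ, 1 ≤ b → b ≤ n - 2 → oneNorm (Xmat n β a) ≤ oneNorm (Xmat n b a))
    (hval : oneNorm (Xmat n β a) = ‖a 0‖ ∨
            oneNorm (Xmat n β a) = 1 + ‖a (n - 1)‖ ∨
            ∃ k : ℕ, 1 ≤ k ∧ k ≤ β - 1 ∧
              oneNorm (Xmat n β a) = 1 + ‖a k‖ / ‖a 0‖) :
    ∀ c : ℕ, 1 ≤ c → c ≤ n - 2 →
      ∀ A : Matrix (Fin n) (Fin n) ℂ, IsTypeEInv n c a A →
        oneNorm (Xmat n β a) ≤ oneNorm A := by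
  intro c hc1 hc2 A hA
  obtain ⟨E, ⟨r, col, hrc, hcr, hcol, hEval, hsup, hcorner, hzero⟩, hAinv⟩ := hA
  have hEeq := Stmt17Aux.Eeq hn hc1 hc2 ha hrc hcr hcol hEval hsup hcorner hzero
  have hBE := Stmt17Aux.BE_one hn ha hcol hcr hEeq
  have hAB : A = Stmt17Aux.Bmat n a r col := by rw [hAinv, Matrix.inv_eq_left_inv hBE]
  rw [hAB]
  rcases hval with h | h | ⟨k, hk1, hk2, h⟩
  · rw [h]; exact Stmt17Aux.abs_a0_le hn
  · rw [h]
    have hk₀ : (n - 2 : ℕ) < n - 1 := by omega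
    have hr : (r (n - 2) : ℕ) = n - 1 := by
      have h1 := hrc (n - 2) (le_refl _)
      have h2 := (hcol (n - 2) (le_refl _)).1
      have h3 := (r (n - 2)).isLt
      omega
    have hkey := Stmt17Aux.key (a := a) hn hc1 hc2 hrc hcr hcol (n - 2) hk₀
    rw [if_pos hr] at hkey
    have e : n - 2 + 1 = n - 1 := by omega
    rw [e] at hkey
    exact hkey
  · rw [h]
    have hk₀ : (k - 1 : ℕ) < n - 1 := by omega
    have hkey := Stmt17Aux.key (a := a) hn hc1 hc2 hrc hcr hcol (k - 1) hk₀
    have e : k - 1 + 1 = k := by omega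
    rw [e] at hkey
    by_cases hr : (r (k - 1) : ℕ) = n - 1
    · rw [if_pos hr] at hkey
      refine le_trans ?_ hkey
      have hd : ‖a k‖ / ‖a 0‖ ≤ ‖a k‖ :=
        div_le_self (norm_nonneg _) (le_of_lt ha0)
      linarith
    · rw [if_neg hr] at hkey
      exact hkey


end
end
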